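/- arXiv:2207.03369 — 5 statements merged into one kernel-verified Lean document; each statement's English description precedes it below -/
import Mathlib

section
/- Let 𝒩 → ℰ →ʲ 𝒢 be a groupoid extension and k: 𝒢 → ℰ a normalized section of j. Define L_x(n) := k(x)·n·k(x)⁻¹ for x ∈ 𝒢, n ∈ N_{s(x)}, and let σ(x,y) ∈ N_{r(x)} be the unique element with k(x)k(y) = σ(x,y)·k(xy) for composable (x,y). Then (L,σ) is a factor system for (𝒢,𝒩): (F1) L_x L_y(n) = σ(x,y) L_{xy}(n) σ(x,y)⁻¹ for all composable (x,y) and n ∈ N_{s(y)}, and (F2) σ(x,y)σ(xy,z) = L_x(σ(y,z))σ(x,yz) for all composable triples (x,y,z). -/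
/-- A groupoid over a unit space `U`, with a total (junk-valued outside composables)
multiplication. `e : U → G` is the inclusion of units. -/
structure Gpd (G U : Type) where
  s : G → U
  r : G → U
  e : U → G
  mul : G → G → G
  inv : G → G
  s_e : ∀ u, s (e u) = u
  r_e : ∀ u, r (e u) = u
  e_mul : ∀ x, mul (e (r x)) x = x
  mul_e : ∀ x, mul x (e (s x)) = x
  s_inv : ∀ x, s (inv x) = r x
  r_inv : ∀ x, r (inv x) = s x
  inv_mul : ∀ x, mul (inv x) x = e (s x)
  mul_inv : ∀ x, mul x (inv x) = e (r x)
  r_mul : ∀ x y, s x = r y → r (mul x y) = r x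
  s_mul : ∀ x y, s x = r y → s (mul x y) = s y
  assoc : ∀ x y z, s x = r y → s y = r z → mul (mul x y) z = mul x (mul y z)

/-- A group bundle over `U`: a total space `N` with projection `p`, each fiber being a group
(operations are total, with group laws holding fiberwise). -/
structure GrpBundle (N U : Type) where
  p : N → U
  one : U → N
  mul : N → N → N
  inv : N → N
  p_one : ∀ u, p (one u) = u
  p_mul : ∀ n m, p n = p m → p (mul n m) = p n
  p_inv : ∀ n, p (inv n) = p n
  one_mul : ∀ n, mul (one (p n)) n = n
  mul_one : ∀ n, mul n (one (p n)) = n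
  inv_mul : ∀ n, mul (inv n) n = one (p n)
  mul_inv : ∀ n, mul n (inv n) = one (p n)
  assoc : ∀ a b c, p a = p b → p b = p c → mul (mul a b) c = mul a (mul b c)

/-- A groupoid extension `𝒩 → ℰ → 𝒢`: a surjective homomorphism `j : E → G` over the common
unit space `U`, inducing the identity on units.  The kernel (the group bundle `𝒩`) is the set
of elements of `E` mapped by `j` to a unit. -/
structure GpdExt {G U E : Type} (𝒢 : Gpd G U) (ℰ : Gpd E U) where
  j : E → G
  j_surj : Function.Surjective j
  j_mul : ∀ x y, ℰ.s x = ℰ.r y → j (ℰ.mul x y) = 𝒢.mul (j x) (j y)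
  j_inv : ∀ x, j (ℰ.inv x) = 𝒢.inv (j x)
  j_e : ∀ u, j (ℰ.e u) = 𝒢.e u
  j_s : ∀ x, 𝒢.s (j x) = ℰ.s x
  j_r : ∀ x, 𝒢.r (j x) = ℰ.r x

/-- Membership in the kernel `𝒩 = ker j`. -/
def GpdExt.inKer {G U E : Type} {𝒢 : Gpd G U} {ℰ : Gpd E U} (ext : GpdExt 𝒢 ℰ) (a : E) : Prop :=
  ∃ u, ext.j a = 𝒢.e u

section Helpers

variable {G U : Type} (𝒢 : Gpd G U)

theorem Gpd.lcancel {x y z : G} (hy : 𝒢.s x = 𝒢.r y) (hz : 𝒢.s x = 𝒢.r z)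
    (h : 𝒢.mul x y = 𝒢.mul x z) : y = z := by
  have h1 : 𝒢.mul (𝒢.inv x) (𝒢.mul x y) = 𝒢.mul (𝒢.inv x) (𝒢.mul x z) := by rw [h]
  rw [← 𝒢.assoc _ _ _ (𝒢.s_inv x) hy, ← 𝒢.assoc _ _ _ (𝒢.s_inv x) hz, 𝒢.inv_mul] at h1
  have hy' : 𝒢.mul (𝒢.e (𝒢.s x)) y = y := by rw [hy]; exact 𝒢.e_mul y
  have hz' : 𝒢.mul (𝒢.e (𝒢.s x)) z = z := by rw [hz]; exact 𝒢.e_mul z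
  rwa [hy', hz'] at h1

theorem Gpd.rcancel {x y z : G} (hx : 𝒢.s x = 𝒢.r z) (hy : 𝒢.s y = 𝒢.r z)
    (h : 𝒢.mul x z = 𝒢.mul y z) : x = y := by
  have h1 : 𝒢.mul (𝒢.mul x z) (𝒢.inv z) = 𝒢.mul (𝒢.mul y z) (𝒢.inv z) := by rw [h]
  rw [𝒢.assoc x z _ hx (𝒢.r_inv z).symm, 𝒢.assoc y z _ hy (𝒢.r_inv z).symm,
    𝒢.mul_inv] at h1
  have hx' : 𝒢.mul x (𝒢.e (𝒢.r z)) = x := by rw [← hx]; exact 𝒢.mul_e x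
  have hy' : 𝒢.mul y (𝒢.e (𝒢.r z)) = y := by rw [← hy]; exact 𝒢.mul_e y
  rwa [hx', hy'] at h1

theorem Gpd.inv_e (u : U) : 𝒢.inv (𝒢.e u) = 𝒢.e u := by
  have h1 : 𝒢.mul (𝒢.e u) (𝒢.inv (𝒢.e u)) = 𝒢.e (𝒢.r (𝒢.e u)) := 𝒢.mul_inv _
  have h2 : 𝒢.mul (𝒢.e (𝒢.r (𝒢.inv (𝒢.e u)))) (𝒢.inv (𝒢.e u)) = 𝒢.inv (𝒢.e u) :=
    𝒢.e_mul _
  rw [𝒢.r_inv, 𝒢.s_e] at h2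
  rw [h2, 𝒢.r_e] at h1
  exact h1

theorem Gpd.inv_mul_rev {x y : G} (h : 𝒢.s x = 𝒢.r y) :
    𝒢.inv (𝒢.mul x y) = 𝒢.mul (𝒢.inv y) (𝒢.inv x) := by
  have hc : 𝒢.s (𝒢.inv y) = 𝒢.r (𝒢.inv x) := by rw [𝒢.s_inv, 𝒢.r_inv]; exact h.symm
  apply 𝒢.lcancel (x := 𝒢.mul x y)
  · exact (𝒢.r_inv _).symm
  · rw [𝒢.r_mul _ _ hc, 𝒢.r_inv, 𝒢.s_mul _ _ h]
  · rw [𝒢.mul_inv]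
    rw [← 𝒢.assoc _ _ _ (by rw [𝒢.s_mul _ _ h, 𝒢.r_inv]) hc]
    rw [𝒢.assoc x y _ h (𝒢.r_inv y).symm, 𝒢.mul_inv]
    have h1 : 𝒢.mul x (𝒢.e (𝒢.r y)) = x := by rw [← h]; exact 𝒢.mul_e x
    rw [h1, 𝒢.mul_inv, 𝒢.r_mul _ _ h]

theorem Gpd.conj_conj {a b n : G} (hab : 𝒢.s a = 𝒢.r b) (hbn : 𝒢.s b = 𝒢.s n)
    (hn : 𝒢.r n = 𝒢.s n) :
    𝒢.mul (𝒢.mul a (𝒢.mul (𝒢.mul b n) (𝒢.inv b))) (𝒢.inv a)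
      = 𝒢.mul (𝒢.mul (𝒢.mul a b) n) (𝒢.inv (𝒢.mul a b)) := by
  have hbn' : 𝒢.s b = 𝒢.r n := hbn.trans hn.symm
  have hsbn : 𝒢.s (𝒢.mul b n) = 𝒢.s n := 𝒢.s_mul b n hbn'
  have hrbn : 𝒢.r (𝒢.mul b n) = 𝒢.r b := 𝒢.r_mul b n hbn'
  rw [𝒢.inv_mul_rev hab]
  rw [𝒢.assoc a b n hab hbn']
  rw [← 𝒢.assoc (𝒢.mul a (𝒢.mul b n)) (𝒢.inv b) (𝒢.inv a)
    (by rw [𝒢.s_mul _ _ (hab.trans hrbn.symm), hsbn, 𝒢.r_inv]; exact hbn.symm)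
    (by rw [𝒢.s_inv, 𝒢.r_inv]; exact hab.symm)]
  rw [𝒢.assoc a (𝒢.mul b n) (𝒢.inv b) (hab.trans hrbn.symm)
    (by rw [hsbn, 𝒢.r_inv]; exact hbn.symm)]

end Helpers

/-- Let `𝒩 → ℰ → 𝒢` be a groupoid extension and `k` a normalized section of
`j`.  Define `L_x(n) = k(x) n k(x)⁻¹` and `σ(x,y) = k(x) k(y) k(xy)⁻¹`.  Then `(L,σ)` is a
factor system for `(𝒢,𝒩)`: `σ(x,y)` lies in the kernel fiber over `r(x)`, `k(x)k(y) =
σ(x,y)k(xy)`, `L_x` maps the kernel fiber over `s(x)` to the one over `r(x)`, `(L,σ)` is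
normalized on units, and (F1), (F2) hold. -/
theorem stmt1 {G U E : Type} (𝒢 : Gpd G U) (ℰ : Gpd E U) (ext : GpdExt 𝒢 ℰ)
    (k : G → E) (hk : ∀ x, ext.j (k x) = x) (hk0 : ∀ u, k (𝒢.e u) = ℰ.e u)
    (L : G → E → E) (hL : ∀ x n, L x n = ℰ.mul (ℰ.mul (k x) n) (ℰ.inv (k x)))
    (σ : G → G → E)
    (hσ : ∀ x y, σ x y = ℰ.mul (ℰ.mul (k x) (k y)) (ℰ.inv (k (𝒢.mul x y)))) :
    -- σ(x,y) ∈ N_{r(x)} and k(x)k(y) = σ(x,y)·k(xy)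
    (∀ x y, 𝒢.s x = 𝒢.r y → ext.inKer (σ x y) ∧ ℰ.s (σ x y) = 𝒢.r x ∧
        ℰ.mul (k x) (k y) = ℰ.mul (σ x y) (k (𝒢.mul x y))) ∧
    -- L_x maps N_{s(x)} into N_{r(x)}
    (∀ x n, ext.inKer n → ℰ.s n = 𝒢.s x → ext.inKer (L x n) ∧ ℰ.s (L x n) = 𝒢.r x) ∧
    -- normalization
    (∀ x, σ (𝒢.e (𝒢.r x)) x = ℰ.e (𝒢.r x)) ∧
    (∀ x, σ x (𝒢.e (𝒢.s x)) = ℰ.e (𝒢.r x)) ∧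
    (∀ u n, ext.inKer n → ℰ.s n = u → L (𝒢.e u) n = n) ∧
    -- (F1) twisted action condition
    (∀ x y n, 𝒢.s x = 𝒢.r y → ext.inKer n → ℰ.s n = 𝒢.s y →
        L x (L y n) = ℰ.mul (ℰ.mul (σ x y) (L (𝒢.mul x y) n)) (ℰ.inv (σ x y))) ∧
    -- (F2) twisted cocycle condition
    (∀ x y z, 𝒢.s x = 𝒢.r y → 𝒢.s y = 𝒢.r z →
        ℰ.mul (σ x y) (σ (𝒢.mul x y) z) = ℰ.mul (L x (σ y z)) (σ x (𝒢.mul y z))) := by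
  have sk : ∀ x, ℰ.s (k x) = 𝒢.s x := fun x => by rw [← ext.j_s, hk]
  have rk : ∀ x, ℰ.r (k x) = 𝒢.r x := fun x => by rw [← ext.j_r, hk]
  have kerS : ∀ n, ext.inKer n → ℰ.r n = ℰ.s n := by
    rintro n ⟨u, hu⟩
    rw [← ext.j_s, ← ext.j_r, hu, 𝒢.s_e, 𝒢.r_e]
  -- main facts about σ
  have main : ∀ x y, 𝒢.s x = 𝒢.r y → ext.inKer (σ x y) ∧ ℰ.s (σ x y) = 𝒢.r x ∧
      ℰ.mul (k x) (k y) = ℰ.mul (σ x y) (k (𝒢.mul x y)) := by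
    intro x y h
    have hxy_s : 𝒢.s (𝒢.mul x y) = 𝒢.s y := 𝒢.s_mul x y h
    have hxy_r : 𝒢.r (𝒢.mul x y) = 𝒢.r x := 𝒢.r_mul x y h
    have comp1 : ℰ.s (k x) = ℰ.r (k y) := by rw [sk, rk]; exact h
    have hs12 : ℰ.s (ℰ.mul (k x) (k y)) = 𝒢.s y := by rw [ℰ.s_mul _ _ comp1, sk]
    have comp2 : ℰ.s (ℰ.mul (k x) (k y)) = ℰ.r (ℰ.inv (k (𝒢.mul x y))) := by
      rw [hs12, ℰ.r_inv, sk, hxy_s]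
    have sσ : ℰ.s (σ x y) = 𝒢.r x := by
      rw [hσ, ℰ.s_mul _ _ comp2, ℰ.s_inv, rk, hxy_r]
    have kerσ : ext.inKer (σ x y) := by
      refine ⟨𝒢.r x, ?_⟩
      rw [hσ, ext.j_mul _ _ comp2, ext.j_mul _ _ comp1, ext.j_inv, hk, hk, hk,
        𝒢.mul_inv, hxy_r]
    refine ⟨kerσ, sσ, ?_⟩
    rw [hσ]
    rw [ℰ.assoc _ _ _ comp2 (ℰ.s_inv _), ℰ.inv_mul]
    have h1 : ℰ.mul (ℰ.mul (k x) (k y)) (ℰ.e (ℰ.s (k (𝒢.mul x y))))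
        = ℰ.mul (k x) (k y) := by
      rw [sk, hxy_s, ← hs12]; exact ℰ.mul_e _
    exact h1.symm
  -- facts about L
  have mainL : ∀ x n, ext.inKer n → ℰ.s n = 𝒢.s x →
      ext.inKer (L x n) ∧ ℰ.s (L x n) = 𝒢.r x := by
    intro x n hn hsn
    have hrn : ℰ.r n = 𝒢.s x := (kerS n hn).trans hsn
    have compn : ℰ.s (k x) = ℰ.r n := by rw [sk, hrn]
    have hs1 : ℰ.s (ℰ.mul (k x) n) = 𝒢.s x := by rw [ℰ.s_mul _ _ compn, hsn]
    have comp2 : ℰ.s (ℰ.mul (k x) n) = ℰ.r (ℰ.inv (k x)) := by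
      rw [hs1, ℰ.r_inv, sk]
    constructor
    · obtain ⟨u, hu⟩ := hn
      have hu' : u = 𝒢.s x := by
        have := ext.j_s n
        rw [hu, 𝒢.s_e] at this
        rw [this, hsn]
      refine ⟨𝒢.r x, ?_⟩
      rw [hL, ext.j_mul _ _ comp2, ext.j_mul _ _ compn, ext.j_inv, hk, hu, hu',
        𝒢.mul_e, 𝒢.mul_inv]
    · rw [hL, ℰ.s_mul _ _ comp2, ℰ.s_inv, rk]
  refine ⟨main, mainL, ?_, ?_, ?_, ?_, ?_⟩
  · -- σ(e(r x), x) = e(r x)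
    intro x
    rw [hσ, hk0, 𝒢.e_mul]
    have h1 : ℰ.mul (ℰ.e (𝒢.r x)) (k x) = k x := by rw [← rk]; exact ℰ.e_mul (k x)
    rw [h1, ℰ.mul_inv, rk]
  · -- σ(x, e(s x)) = e(r x)
    intro x
    rw [hσ, hk0, 𝒢.mul_e]
    have h1 : ℰ.mul (k x) (ℰ.e (𝒢.s x)) = k x := by rw [← sk]; exact ℰ.mul_e (k x)
    rw [h1, ℰ.mul_inv, rk]
  · -- L(e u) n = n
    intro u n hn hsn
    have hrn : ℰ.r n = u := (kerS n hn).trans hsn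
    rw [hL, hk0, ℰ.inv_e]
    have h1 : ℰ.mul (ℰ.e u) n = n := by rw [← hrn]; exact ℰ.e_mul n
    have h2 : ℰ.mul n (ℰ.e u) = n := by rw [← hsn]; exact ℰ.mul_e n
    rw [h1, h2]
  · -- (F1)
    intro x y n h hn hsn
    obtain ⟨kerσ, sσ, hrel⟩ := main x y h
    have hxy_s : 𝒢.s (𝒢.mul x y) = 𝒢.s y := 𝒢.s_mul x y h
    have hxy_r : 𝒢.r (𝒢.mul x y) = 𝒢.r x := 𝒢.r_mul x y h
    have hnn : ℰ.r n = ℰ.s n := kerS n hn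
    have comp1 : ℰ.s (k x) = ℰ.r (k y) := by rw [sk, rk]; exact h
    rw [hL, hL, hL]
    rw [ℰ.conj_conj comp1 (by rw [sk, hsn]) hnn]
    rw [hrel]
    rw [← ℰ.conj_conj (a := σ x y) (b := k (𝒢.mul x y))
      (by rw [sσ, rk, hxy_r]) (by rw [sk, hxy_s, hsn]) hnn]
  · -- (F2)
    intro x y z hxy hyz
    have hxy_s : 𝒢.s (𝒢.mul x y) = 𝒢.s y := 𝒢.s_mul x y hxy
    have hxy_r : 𝒢.r (𝒢.mul x y) = 𝒢.r x := 𝒢.r_mul x y hxy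
    have hyz_s : 𝒢.s (𝒢.mul y z) = 𝒢.s z := 𝒢.s_mul y z hyz
    have hyz_r : 𝒢.r (𝒢.mul y z) = 𝒢.r y := 𝒢.r_mul y z hyz
    have hc1 : 𝒢.s (𝒢.mul x y) = 𝒢.r z := by rw [hxy_s]; exact hyz
    have hc2 : 𝒢.s x = 𝒢.r (𝒢.mul y z) := by rw [hyz_r]; exact hxy
    obtain ⟨kerA, sA, relA⟩ := main x y hxy
    obtain ⟨kerB, sB, relB⟩ := main (𝒢.mul x y) z hc1
    obtain ⟨kerC, sC, relC⟩ := main y z hyz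
    obtain ⟨kerD, sD, relD⟩ := main x (𝒢.mul y z) hc2
    have rB : ℰ.r (σ (𝒢.mul x y) z) = 𝒢.r x := by
      rw [kerS _ kerB, sB, hxy_r]
    have rC : ℰ.r (σ y z) = 𝒢.r y := by rw [kerS _ kerC, sC]
    have rD : ℰ.r (σ x (𝒢.mul y z)) = 𝒢.r x := by rw [kerS _ kerD, sD]
    have ⟨kerL, sL⟩ := mainL x (σ y z) kerC (by rw [sC, ← hxy])
    have rkw : ℰ.r (k (𝒢.mul (𝒢.mul x y) z)) = 𝒢.r x := by
      rw [rk, 𝒢.r_mul _ _ hc1, hxy_r]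
    have rkw' : ℰ.r (k (𝒢.mul x (𝒢.mul y z))) = 𝒢.r x := by
      rw [rk, 𝒢.r_mul _ _ hc2]
    -- left side times k(w)
    have eqA : ℰ.mul (ℰ.mul (σ x y) (σ (𝒢.mul x y) z)) (k (𝒢.mul (𝒢.mul x y) z))
        = ℰ.mul (ℰ.mul (k x) (k y)) (k z) := by
      rw [ℰ.assoc _ _ _ (by rw [sA, rB]) (by rw [sB, hxy_r, rkw])]
      rw [← relB]
      rw [← ℰ.assoc _ _ _ (by rw [sA, rk, hxy_r]) (by rw [sk, rk, hxy_s]; exact hyz)]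
      rw [← relA]
    -- right side times k(w')
    have eqB : ℰ.mul (ℰ.mul (L x (σ y z)) (σ x (𝒢.mul y z))) (k (𝒢.mul x (𝒢.mul y z)))
        = ℰ.mul (ℰ.mul (k x) (k y)) (k z) := by
      rw [ℰ.assoc _ _ _ (by rw [sL, rD]) (by rw [sD, rkw'])]
      rw [← relD]
      rw [hL]
      rw [ℰ.assoc (ℰ.mul (k x) (σ y z)) (ℰ.inv (k x)) (ℰ.mul (k x) (k (𝒢.mul y z)))
        (by rw [ℰ.s_mul _ _ (by rw [sk, rC]; exact hxy), sC, ℰ.r_inv, sk]; exact hxy.symm)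
        (by rw [ℰ.s_inv, rk, ℰ.r_mul _ _ (by rw [sk, rk]; exact hc2), rk])]
      rw [← ℰ.assoc (ℰ.inv (k x)) (k x) (k (𝒢.mul y z)) (ℰ.s_inv _)
        (by rw [sk, rk]; exact hc2)]
      rw [ℰ.inv_mul]
      have h1 : ℰ.mul (ℰ.e (ℰ.s (k x))) (k (𝒢.mul y z)) = k (𝒢.mul y z) := by
        rw [sk, hxy, ← hyz_r, ← rk]; exact ℰ.e_mul _
      rw [h1]
      rw [ℰ.assoc (k x) (σ y z) (k (𝒢.mul y z)) (by rw [sk, rC]; exact hxy)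
        (by rw [sC, rk, hyz_r])]
      rw [← relC]
      rw [← ℰ.assoc (k x) (k y) (k z) (by rw [sk, rk]; exact hxy)
        (by rw [sk, rk]; exact hyz)]
    rw [← 𝒢.assoc x y z hxy hyz] at eqB
    exact ℰ.rcancel (by rw [ℰ.s_mul _ _ (by rw [sA, rB]), sB, hxy_r, rkw])
      (by rw [ℰ.s_mul _ _ (by rw [sL, rD]), sD, rkw]) (eqA.trans eqB.symm)
end

section
/- Let (L,σ) be a factor system for (𝒢,𝒩). Then the set 𝒩 ×_(p,r) 𝒢 = {(n,x) : p(n) = r(x)} becomes a groupoid with unit space identified with 𝒢⁽⁰⁾, where s(n,x) = s(x), r(n,x) = r(x), the product is (n,x)(m,y) = (n·L_x(m)·σ(x,y), xy) when s(x) = r(y), and the inverse is (n,x)⁻¹ = (σ(x⁻¹,x)⁻¹·L_{x⁻¹}(n⁻¹), x⁻¹). In particular, the product is associative and (n,x)(n,x)⁻¹ = (1_{r(x)}, r(x)) and (n,x)⁻¹(n,x) = (1_{s(x)}, s(x)). -/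
/-- A pair `(L, σ)` satisfying all the conditions of a factor system for `(𝒢, 𝒩)` except
possibly the twisted cocycle condition (F2): `L` is a family of fiberwise group isomorphisms
`L x : N_{s x} → N_{r x}`, trivial on units, and `σ : 𝒢⁽²⁾ → 𝒩` is normalized with
`σ (x, y) ∈ N_{r x}`, satisfying the twisted action condition (F1). -/
structure PreFS {G U N : Type} (𝒢 : Gpd G U) (𝒩 : GrpBundle N U) where
  L : G → N → N
  σ : G → G → N
  L_fib : ∀ x n, 𝒩.p n = 𝒢.s x → 𝒩.p (L x n) = 𝒢.r x
  L_mul : ∀ x n m, 𝒩.p n = 𝒢.s x → 𝒩.p m = 𝒢.s x →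
    L x (𝒩.mul n m) = 𝒩.mul (L x n) (L x m)
  L_bij : ∀ x, Set.BijOn (L x) {n | 𝒩.p n = 𝒢.s x} {n | 𝒩.p n = 𝒢.r x}
  L_e : ∀ u n, 𝒩.p n = u → L (𝒢.e u) n = n
  σ_fib : ∀ x y, 𝒢.s x = 𝒢.r y → 𝒩.p (σ x y) = 𝒢.r x
  σ_e_left : ∀ x, σ (𝒢.e (𝒢.r x)) x = 𝒩.one (𝒢.r x)
  σ_e_right : ∀ x, σ x (𝒢.e (𝒢.s x)) = 𝒩.one (𝒢.r x)
  F1 : ∀ x y n, 𝒢.s x = 𝒢.r y → 𝒩.p n = 𝒢.s y →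
    L x (L y n) = 𝒩.mul (𝒩.mul (σ x y) (L (𝒢.mul x y) n)) (𝒩.inv (σ x y))

/-- A factor system `(L, σ)` for `(𝒢, 𝒩)`: conditions (F1) and (F2). -/
structure FS {G U N : Type} (𝒢 : Gpd G U) (𝒩 : GrpBundle N U) extends PreFS 𝒢 𝒩 where
  F2 : ∀ x y z, 𝒢.s x = 𝒢.r y → 𝒢.s y = 𝒢.r z →
    𝒩.mul (σ x y) (σ (𝒢.mul x y) z) = 𝒩.mul (L x (σ y z)) (σ x (𝒢.mul y z))

variable {G U N : Type}

/-- The product `(n,x)(m,y) = (n ⬝ L_x(m) ⬝ σ(x,y), xy)` on `𝒩 ×_(L,σ) 𝒢`. -/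
def pmul (𝒢 : Gpd G U) (𝒩 : GrpBundle N U) (L : G → N → N) (σ : G → G → N)
    (q q' : N × G) : N × G :=
  (𝒩.mul (𝒩.mul q.1 (L q.2 q'.1)) (σ q.2 q'.2), 𝒢.mul q.2 q'.2)

/-- The inverse `(n,x)⁻¹ = (σ(x⁻¹,x)⁻¹ ⬝ L_{x⁻¹}(n⁻¹), x⁻¹)` on `𝒩 ×_(L,σ) 𝒢`. -/
def pinv (𝒢 : Gpd G U) (𝒩 : GrpBundle N U) (L : G → N → N) (σ : G → G → N)
    (q : N × G) : N × G :=
  (𝒩.mul (𝒩.inv (σ (𝒢.inv q.2) q.2)) (L (𝒢.inv q.2) (𝒩.inv q.1)), 𝒢.inv q.2)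

/-- The fiber of the group bundle over `u`, as a type. -/
abbrev Fib (𝒩 : GrpBundle N U) (u : U) : Type := {n : N // 𝒩.p n = u}

instance (𝒩 : GrpBundle N U) (u : U) : Group (Fib 𝒩 u) where
  mul a b := ⟨𝒩.mul a.1 b.1, by rw [𝒩.p_mul _ _ (a.2.trans b.2.symm)]; exact a.2⟩
  one := ⟨𝒩.one u, 𝒩.p_one u⟩
  inv a := ⟨𝒩.inv a.1, (𝒩.p_inv a.1).trans a.2⟩
  mul_assoc a b c := Subtype.ext (𝒩.assoc _ _ _ (a.2.trans b.2.symm) (b.2.trans c.2.symm))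
  one_mul a := Subtype.ext (by have := 𝒩.one_mul a.1; rwa [a.2] at this)
  mul_one a := Subtype.ext (by have := 𝒩.mul_one a.1; rwa [a.2] at this)
  inv_mul_cancel a := Subtype.ext (by have := 𝒩.inv_mul a.1; rwa [a.2] at this)

lemma Fib.mul_val (𝒩 : GrpBundle N U) (u : U) (a b : Fib 𝒩 u) :
    (a * b).1 = 𝒩.mul a.1 b.1 := rfl

lemma preL_one {𝒢 : Gpd G U} {𝒩 : GrpBundle N U} (F : PreFS 𝒢 𝒩) (x : G) :
    F.L x (𝒩.one (𝒢.s x)) = 𝒩.one (𝒢.r x) := by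
  have hf : 𝒩.p (F.L x (𝒩.one (𝒢.s x))) = 𝒢.r x := F.L_fib _ _ (𝒩.p_one _)
  have h : (⟨_, hf⟩ : Fib 𝒩 (𝒢.r x)) * ⟨_, hf⟩ = ⟨_, hf⟩ := by
    refine Subtype.ext ?_
    show 𝒩.mul (F.L x (𝒩.one (𝒢.s x))) (F.L x (𝒩.one (𝒢.s x))) = _
    rw [← F.L_mul x _ _ (𝒩.p_one _) (𝒩.p_one _)]
    congr 1
    have := 𝒩.one_mul (𝒩.one (𝒢.s x)); rwa [𝒩.p_one] at this
  exact congrArg Subtype.val (mul_eq_left.mp h)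

lemma preL_inv {𝒢 : Gpd G U} {𝒩 : GrpBundle N U} (F : PreFS 𝒢 𝒩) (x : G) (a : N)
    (ha : 𝒩.p a = 𝒢.s x) : F.L x (𝒩.inv a) = 𝒩.inv (F.L x a) := by
  have hfa : 𝒩.p (F.L x a) = 𝒢.r x := F.L_fib _ _ ha
  have hfi : 𝒩.p (F.L x (𝒩.inv a)) = 𝒢.r x := F.L_fib _ _ ((𝒩.p_inv a).trans ha)
  have h : (⟨_, hfi⟩ : Fib 𝒩 (𝒢.r x)) * ⟨_, hfa⟩ = 1 := by
    refine Subtype.ext ?_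
    show 𝒩.mul (F.L x (𝒩.inv a)) (F.L x a) = 𝒩.one (𝒢.r x)
    rw [← F.L_mul x _ _ ((𝒩.p_inv a).trans ha) ha]
    have h2 := 𝒩.inv_mul a
    rw [ha] at h2
    rw [h2, preL_one]
  exact congrArg Subtype.val (eq_inv_of_mul_eq_one_left h)

/-- For a factor system `(L,σ)` for `(𝒢,𝒩)`, the set
`𝒩 ×_(p,r) 𝒢 = {(n,x) : p n = r x}` becomes a groupoid over `𝒢⁽⁰⁾` with
`s(n,x) = s x`, `r(n,x) = r x`, product `(n,x)(m,y) = (n L_x(m) σ(x,y), xy)` and inverse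
`(n,x)⁻¹ = (σ(x⁻¹,x)⁻¹ L_{x⁻¹}(n⁻¹), x⁻¹)`: the product of composable valid pairs is a valid
pair, units act as units, the product is associative, and the inverse laws hold. -/
theorem stmt2 {G U N : Type} (𝒢 : Gpd G U) (𝒩 : GrpBundle N U) (F : FS 𝒢 𝒩) :
    -- closure: the product of valid composable pairs is valid, with the expected range/source
    (∀ n x m y, 𝒩.p n = 𝒢.r x → 𝒩.p m = 𝒢.r y → 𝒢.s x = 𝒢.r y →
      𝒩.p (pmul 𝒢 𝒩 F.L F.σ (n, x) (m, y)).1 = 𝒢.r (𝒢.mul x y) ∧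
      𝒢.r (pmul 𝒢 𝒩 F.L F.σ (n, x) (m, y)).2 = 𝒢.r x ∧
      𝒢.s (pmul 𝒢 𝒩 F.L F.σ (n, x) (m, y)).2 = 𝒢.s y) ∧
    -- closure of the inverse
    (∀ n x, 𝒩.p n = 𝒢.r x →
      𝒩.p (pinv 𝒢 𝒩 F.L F.σ (n, x)).1 = 𝒢.r (𝒢.inv x)) ∧
    -- unit laws
    (∀ n x, 𝒩.p n = 𝒢.r x →
      pmul 𝒢 𝒩 F.L F.σ (𝒩.one (𝒢.r x), 𝒢.e (𝒢.r x)) (n, x) = (n, x) ∧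
      pmul 𝒢 𝒩 F.L F.σ (n, x) (𝒩.one (𝒢.s x), 𝒢.e (𝒢.s x)) = (n, x)) ∧
    -- associativity
    (∀ n x m y l z, 𝒩.p n = 𝒢.r x → 𝒩.p m = 𝒢.r y → 𝒩.p l = 𝒢.r z →
      𝒢.s x = 𝒢.r y → 𝒢.s y = 𝒢.r z →
      pmul 𝒢 𝒩 F.L F.σ (pmul 𝒢 𝒩 F.L F.σ (n, x) (m, y)) (l, z) =
        pmul 𝒢 𝒩 F.L F.σ (n, x) (pmul 𝒢 𝒩 F.L F.σ (m, y) (l, z))) ∧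
    -- inverse laws
    (∀ n x, 𝒩.p n = 𝒢.r x →
      pmul 𝒢 𝒩 F.L F.σ (n, x) (pinv 𝒢 𝒩 F.L F.σ (n, x)) =
        (𝒩.one (𝒢.r x), 𝒢.e (𝒢.r x)) ∧
      pmul 𝒢 𝒩 F.L F.σ (pinv 𝒢 𝒩 F.L F.σ (n, x)) (n, x) =
        (𝒩.one (𝒢.s x), 𝒢.e (𝒢.s x))) := by
  refine ⟨?_, ?_, ?_, ?_, ?_⟩
  · -- closure of product
    intro n x m y hn hm hxy
    have h1 : 𝒩.p (F.L x m) = 𝒢.r x := F.L_fib _ _ (hm.trans hxy.symm)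
    have h2 : 𝒩.p (F.σ x y) = 𝒢.r x := F.σ_fib x y hxy
    refine ⟨?_, 𝒢.r_mul x y hxy, 𝒢.s_mul x y hxy⟩
    show 𝒩.p (𝒩.mul (𝒩.mul n (F.L x m)) (F.σ x y)) = _
    rw [𝒩.p_mul _ _ (by rw [𝒩.p_mul _ _ (hn.trans h1.symm), hn, h2]),
      𝒩.p_mul _ _ (hn.trans h1.symm), hn, 𝒢.r_mul x y hxy]
  · -- closure of inverse
    intro n x hn
    have hσ : 𝒩.p (F.σ (𝒢.inv x) x) = 𝒢.r (𝒢.inv x) := F.σ_fib _ _ (𝒢.s_inv x)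
    have hL : 𝒩.p (F.L (𝒢.inv x) (𝒩.inv n)) = 𝒢.r (𝒢.inv x) :=
      F.L_fib _ _ (by rw [𝒩.p_inv, hn, 𝒢.s_inv])
    show 𝒩.p (𝒩.mul (𝒩.inv (F.σ (𝒢.inv x) x)) (F.L (𝒢.inv x) (𝒩.inv n))) = _
    rw [𝒩.p_mul _ _ (by rw [𝒩.p_inv, hσ, hL]), 𝒩.p_inv, hσ]
  · -- unit laws
    intro n x hn
    constructor
    · refine Prod.ext ?_ (𝒢.e_mul x)
      show 𝒩.mul (𝒩.mul (𝒩.one (𝒢.r x)) (F.L (𝒢.e (𝒢.r x)) n)) (F.σ (𝒢.e (𝒢.r x)) x) = n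
      rw [F.L_e _ _ hn, F.σ_e_left x, ← hn, 𝒩.one_mul, 𝒩.mul_one]
    · refine Prod.ext ?_ (𝒢.mul_e x)
      show 𝒩.mul (𝒩.mul n (F.L x (𝒩.one (𝒢.s x)))) (F.σ x (𝒢.e (𝒢.s x))) = n
      rw [preL_one F.toPreFS x, F.σ_e_right x, ← hn, 𝒩.mul_one, 𝒩.mul_one]
  · -- associativity
    intro n x m y l z hn hm hl hxy hyz
    refine Prod.ext ?_ (𝒢.assoc x y z hxy hyz)
    have hrxy : 𝒢.r (𝒢.mul x y) = 𝒢.r x := 𝒢.r_mul x y hxy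
    have hsxy : 𝒢.s (𝒢.mul x y) = 𝒢.r z := by rw [𝒢.s_mul x y hxy, hyz]
    have hm' : 𝒩.p m = 𝒢.s x := hm.trans hxy.symm
    have hl' : 𝒩.p l = 𝒢.s y := hl.trans hyz.symm
    have hLyl : 𝒩.p (F.L y l) = 𝒢.s x := (F.L_fib y l hl').trans hxy.symm
    have hσyz : 𝒩.p (F.σ y z) = 𝒢.s x := (F.σ_fib y z hyz).trans hxy.symm
    let a : Fib 𝒩 (𝒢.r x) := ⟨n, hn⟩
    let b : Fib 𝒩 (𝒢.r x) := ⟨F.L x m, F.L_fib x m hm'⟩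
    let c : Fib 𝒩 (𝒢.r x) := ⟨F.σ x y, F.σ_fib x y hxy⟩
    let d : Fib 𝒩 (𝒢.r x) := ⟨F.L (𝒢.mul x y) l,
      by rw [F.L_fib _ _ (by rw [𝒢.s_mul x y hxy]; exact hl'), hrxy]⟩
    let e' : Fib 𝒩 (𝒢.r x) := ⟨F.σ (𝒢.mul x y) z, by rw [F.σ_fib _ _ hsxy, hrxy]⟩
    let f : Fib 𝒩 (𝒢.r x) := ⟨F.L x (F.L y l), F.L_fib x _ hLyl⟩
    let g : Fib 𝒩 (𝒢.r x) := ⟨F.L x (F.σ y z), F.L_fib x _ hσyz⟩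
    let h' : Fib 𝒩 (𝒢.r x) := ⟨F.σ x (𝒢.mul y z),
      F.σ_fib x _ (by rw [𝒢.r_mul y z hyz]; exact hxy)⟩
    have hF1 : f = c * d * c⁻¹ := Subtype.ext (F.F1 x y l hxy hl')
    have hF2 : c * e' = g * h' := Subtype.ext (F.F2 x y z hxy hyz)
    have key : (((a * b) * c) * d) * e' = (a * ((b * f) * g)) * h' := by
      have hh : h' = g⁻¹ * (c * e') := by rw [hF2]; group
      rw [hF1, hh]; group
    have hv := congrArg Subtype.val key
    have hQ2 : F.L x (𝒩.mul m (F.L y l)) = 𝒩.mul (F.L x m) (F.L x (F.L y l)) :=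
      F.L_mul x _ _ hm' hLyl
    have hQ : F.L x (𝒩.mul (𝒩.mul m (F.L y l)) (F.σ y z)) =
        𝒩.mul (F.L x (𝒩.mul m (F.L y l))) (F.L x (F.σ y z)) :=
      F.L_mul x _ _ (by rw [𝒩.p_mul _ _ (hm'.trans hLyl.symm)]; exact hm') hσyz
    show 𝒩.mul (𝒩.mul (𝒩.mul (𝒩.mul n (F.L x m)) (F.σ x y)) (F.L (𝒢.mul x y) l))
        (F.σ (𝒢.mul x y) z) =
      𝒩.mul (𝒩.mul n (F.L x (𝒩.mul (𝒩.mul m (F.L y l)) (F.σ y z)))) (F.σ x (𝒢.mul y z))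
    rw [hQ, hQ2]
    exact hv
  · -- inverse laws
    intro n x hn
    have pσ' : 𝒩.p (F.σ (𝒢.inv x) x) = 𝒢.s x := (F.σ_fib _ _ (𝒢.s_inv x)).trans (𝒢.r_inv x)
    have pinvn : 𝒩.p (𝒩.inv n) = 𝒢.s (𝒢.inv x) := by rw [𝒩.p_inv, hn, 𝒢.s_inv]
    constructor
    · refine Prod.ext ?_ (𝒢.mul_inv x)
      have pa : 𝒩.p (F.σ x (𝒢.inv x)) = 𝒢.r x := F.σ_fib _ _ (𝒢.r_inv x).symm
      have pb : 𝒩.p (F.L x (F.σ (𝒢.inv x) x)) = 𝒢.r x :=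
        F.L_fib _ _ (pσ')
      -- σ(x,x⁻¹) = L x (σ(x⁻¹,x))
      have hF2' := F.F2 x (𝒢.inv x) x (𝒢.r_inv x).symm (𝒢.s_inv x)
      rw [𝒢.mul_inv, 𝒢.inv_mul, F.σ_e_left x, F.σ_e_right x] at hF2'
      have e1 := 𝒩.mul_one (F.σ x (𝒢.inv x)); rw [pa] at e1
      have e2 := 𝒩.mul_one (F.L x (F.σ (𝒢.inv x) x)); rw [pb] at e2
      have h4 : F.σ x (𝒢.inv x) = F.L x (F.σ (𝒢.inv x) x) := e1.symm.trans (hF2'.trans e2)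
      -- expand
      have h1 : F.L x (𝒩.mul (𝒩.inv (F.σ (𝒢.inv x) x)) (F.L (𝒢.inv x) (𝒩.inv n))) =
          𝒩.mul (F.L x (𝒩.inv (F.σ (𝒢.inv x) x))) (F.L x (F.L (𝒢.inv x) (𝒩.inv n))) :=
        F.L_mul x _ _ (by rw [𝒩.p_inv]; exact pσ')
          ((F.L_fib _ _ pinvn).trans (𝒢.r_inv x))
      have h2 : F.L x (𝒩.inv (F.σ (𝒢.inv x) x)) = 𝒩.inv (F.L x (F.σ (𝒢.inv x) x)) :=
        preL_inv F.toPreFS x _ (pσ')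
      have h3 : F.L x (F.L (𝒢.inv x) (𝒩.inv n)) =
          𝒩.mul (𝒩.mul (F.σ x (𝒢.inv x)) (𝒩.inv n)) (𝒩.inv (F.σ x (𝒢.inv x))) := by
        have := F.F1 x (𝒢.inv x) (𝒩.inv n) (𝒢.r_inv x).symm pinvn
        rwa [𝒢.mul_inv, F.L_e _ _ (by rw [𝒩.p_inv]; exact hn)] at this
      show 𝒩.mul (𝒩.mul n (F.L x (𝒩.mul (𝒩.inv (F.σ (𝒢.inv x) x))
          (F.L (𝒢.inv x) (𝒩.inv n))))) (F.σ x (𝒢.inv x)) = 𝒩.one (𝒢.r x)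
      rw [h1, h2, h3, ← h4]
      let A : Fib 𝒩 (𝒢.r x) := ⟨n, hn⟩
      let S : Fib 𝒩 (𝒢.r x) := ⟨F.σ x (𝒢.inv x), pa⟩
      have key : (A * (S⁻¹ * ((S * A⁻¹) * S⁻¹))) * S = 1 := by group
      exact congrArg Subtype.val key
    · refine Prod.ext ?_ (𝒢.inv_mul x)
      have pC : 𝒩.p (F.L (𝒢.inv x) n) = 𝒢.s x :=
        (F.L_fib _ _ (hn.trans (𝒢.s_inv x).symm)).trans (𝒢.r_inv x)
      have hLi : F.L (𝒢.inv x) (𝒩.inv n) = 𝒩.inv (F.L (𝒢.inv x) n) :=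
        preL_inv F.toPreFS (𝒢.inv x) n (hn.trans (𝒢.s_inv x).symm)
      show 𝒩.mul (𝒩.mul (𝒩.mul (𝒩.inv (F.σ (𝒢.inv x) x)) (F.L (𝒢.inv x) (𝒩.inv n)))
          (F.L (𝒢.inv x) n)) (F.σ (𝒢.inv x) x) = 𝒩.one (𝒢.s x)
      rw [hLi]
      let S' : Fib 𝒩 (𝒢.s x) := ⟨F.σ (𝒢.inv x) x, pσ'⟩
      let C : Fib 𝒩 (𝒢.s x) := ⟨F.L (𝒢.inv x) n, pC⟩
      have key : ((S'⁻¹ * C⁻¹) * C) * S' = 1 := by group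
      exact congrArg Subtype.val key
end

section
/- Let 𝒩 → ℰ →ʲ 𝒢 be a groupoid extension, k a normalized section of j, and (L,σ) the associated factor system. Then the map φ: 𝒩 ×_(L,σ) 𝒢 → ℰ, φ(n,x) = n·k(x), is a groupoid isomorphism satisfying j∘φ(n,x) = x and φ(n, p(n)) = n; i.e., 𝒩 ×_(L,σ) 𝒢 and ℰ are equivalent extensions of 𝒢 by 𝒩. -/
/-- Let `𝒩 → ℰ → 𝒢` be a groupoid extension, `k` a normalized section of `j`,
and `(L,σ)` the associated factor system (`L_x(n) = k(x) n k(x)⁻¹`,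
`σ(x,y) = k(x)k(y)k(xy)⁻¹`).  Then `φ(n,x) = n·k(x)` is a groupoid isomorphism
`𝒩 ×_(L,σ) 𝒢 → ℰ` with `j(φ(n,x)) = x` and `φ(n, p(n)) = n`; i.e. `𝒩 ×_(L,σ) 𝒢` and `ℰ` are
equivalent extensions of `𝒢` by `𝒩`. -/
theorem stmt5 {G U E : Type} (𝒢 : Gpd G U) (ℰ : Gpd E U) (ext : GpdExt 𝒢 ℰ)
    (k : G → E) (hk : ∀ x, ext.j (k x) = x) (hk0 : ∀ u, k (𝒢.e u) = ℰ.e u)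
    (L : G → E → E) (hL : ∀ x n, L x n = ℰ.mul (ℰ.mul (k x) n) (ℰ.inv (k x)))
    (σ : G → G → E)
    (hσ : ∀ x y, σ x y = ℰ.mul (ℰ.mul (k x) (k y)) (ℰ.inv (k (𝒢.mul x y)))) :
    -- φ is a bijection from 𝒩 ×_(L,σ) 𝒢 onto ℰ
    Function.Bijective
      (fun q : {q : E × G // ext.inKer q.1 ∧ ℰ.s q.1 = 𝒢.r q.2} =>
        ℰ.mul q.1.1 (k q.1.2)) ∧
    -- φ is multiplicative w.r.t. the product (n,x)(m,y) = (n L_x(m) σ(x,y), xy)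
    (∀ n x m y, ext.inKer n → ℰ.s n = 𝒢.r x → ext.inKer m → ℰ.s m = 𝒢.r y →
      𝒢.s x = 𝒢.r y →
      ℰ.mul (ℰ.mul (ℰ.mul n (L x m)) (σ x y)) (k (𝒢.mul x y)) =
        ℰ.mul (ℰ.mul n (k x)) (ℰ.mul m (k y))) ∧
    -- φ commutes with the projections to 𝒢
    (∀ n x, ext.inKer n → ℰ.s n = 𝒢.r x → ext.j (ℰ.mul n (k x)) = x) ∧
    -- φ restricts to the identity on 𝒩
    (∀ n, ext.inKer n → ℰ.mul n (k (𝒢.e (ℰ.s n))) = n) := by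
  have hsk : ∀ x, ℰ.s (k x) = 𝒢.s x := fun x => by rw [← ext.j_s, hk]
  have hrk : ∀ x, ℰ.r (k x) = 𝒢.r x := fun x => by rw [← ext.j_r, hk]
  have hker_sr : ∀ n, ext.inKer n → ℰ.r n = ℰ.s n := by
    rintro n ⟨u, hu⟩
    rw [← ext.j_s, ← ext.j_r, hu, 𝒢.s_e, 𝒢.r_e]
  have cancel : ∀ a x, ℰ.s a = 𝒢.s x →
      ℰ.mul (ℰ.mul a (ℰ.inv (k x))) (k x) = a := by
    intro a x h
    have h1 : ℰ.s a = ℰ.r (ℰ.inv (k x)) := by rw [ℰ.r_inv, hsk, h]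
    rw [ℰ.assoc a _ _ h1 (ℰ.s_inv _), ℰ.inv_mul, hsk, ← h, ℰ.mul_e]
  have cancel2 : ∀ a x, ℰ.s a = 𝒢.r x →
      ℰ.mul (ℰ.mul a (k x)) (ℰ.inv (k x)) = a := by
    intro a x h
    have h1 : ℰ.s a = ℰ.r (k x) := by rw [hrk, h]
    rw [ℰ.assoc a _ _ h1 (ℰ.r_inv _).symm, ℰ.mul_inv, hrk, ← h, ℰ.mul_e]
  have hproj : ∀ n x, ext.inKer n → ℰ.s n = 𝒢.r x → ext.j (ℰ.mul n (k x)) = x := by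
    rintro n x ⟨u, hu⟩ hs
    have hcomp : ℰ.s n = ℰ.r (k x) := by rw [hrk, hs]
    have hu' : u = 𝒢.r x := by
      have h2 := ext.j_s n
      rw [hu, 𝒢.s_e] at h2
      rw [h2, hs]
    rw [ext.j_mul _ _ hcomp, hu, hk, hu', 𝒢.e_mul]
  refine ⟨⟨?_, ?_⟩, ?_, ?_, ?_⟩
  · -- injective
    rintro ⟨⟨n, x⟩, hn, hsn⟩ ⟨⟨m, y⟩, hm, hsm⟩ h
    simp only at h
    have hxy : x = y := by
      rw [← hproj n x hn hsn, ← hproj m y hm hsm, h]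
    subst hxy
    have hnm : n = m := by
      rw [← cancel2 n x hsn, h, cancel2 m x hsm]
    subst hnm
    rfl
  · -- surjective
    intro a
    have hcomp : ℰ.s a = ℰ.r (ℰ.inv (k (ext.j a))) := by
      rw [ℰ.r_inv, hsk, ext.j_s]
    refine ⟨⟨(ℰ.mul a (ℰ.inv (k (ext.j a))), ext.j a), ⟨𝒢.r (ext.j a), ?_⟩, ?_⟩, ?_⟩
    · rw [ext.j_mul _ _ hcomp, ext.j_inv, hk, 𝒢.mul_inv]
    · rw [ℰ.s_mul _ _ hcomp, ℰ.s_inv, hrk]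
    · exact cancel a (ext.j a) (ext.j_s a).symm
  · -- multiplicative
    rintro n x m y hn hsn hm hsm hxy
    have hrn : ℰ.r n = 𝒢.r x := by rw [hker_sr n hn, hsn]
    have hrm : ℰ.r m = 𝒢.r y := by rw [hker_sr m hm, hsm]
    have hAm : ℰ.s (k x) = ℰ.r m := by rw [hsk, hrm, hxy]
    have hsAm : ℰ.s (ℰ.mul (k x) m) = 𝒢.r y := by rw [ℰ.s_mul _ _ hAm, hsm]
    have hAmA : ℰ.s (ℰ.mul (k x) m) = ℰ.r (ℰ.inv (k x)) := by
      rw [hsAm, ℰ.r_inv, hsk, hxy]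
    have hsL : ℰ.s (ℰ.mul (ℰ.mul (k x) m) (ℰ.inv (k x))) = 𝒢.r x := by
      rw [ℰ.s_mul _ _ hAmA, ℰ.s_inv, hrk]
    have hrL : ℰ.r (ℰ.mul (ℰ.mul (k x) m) (ℰ.inv (k x))) = 𝒢.r x := by
      rw [ℰ.r_mul _ _ hAmA, ℰ.r_mul _ _ hAm, hrk]
    have hnL' : ℰ.s n = ℰ.r (ℰ.mul (ℰ.mul (k x) m) (ℰ.inv (k x))) := hsn.trans hrL.symm
    have hAB : ℰ.s (k x) = ℰ.r (k y) := by rw [hsk, hrk, hxy]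
    have hsAB : ℰ.s (ℰ.mul (k x) (k y)) = 𝒢.s y := by rw [ℰ.s_mul _ _ hAB, hsk]
    have hABC : ℰ.s (ℰ.mul (k x) (k y)) = ℰ.r (ℰ.inv (k (𝒢.mul x y))) := by
      rw [hsAB, ℰ.r_inv, hsk, 𝒢.s_mul x y hxy]
    have hsσ : ℰ.s (ℰ.mul (ℰ.mul (k x) (k y)) (ℰ.inv (k (𝒢.mul x y)))) =
        ℰ.r (k (𝒢.mul x y)) := by
      rw [ℰ.s_mul _ _ hABC, ℰ.s_inv]
    have hrσ : ℰ.r (ℰ.mul (ℰ.mul (k x) (k y)) (ℰ.inv (k (𝒢.mul x y)))) = 𝒢.r x := by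
      rw [ℰ.r_mul _ _ hABC, ℰ.r_mul _ _ hAB, hrk]
    have cancelσ : ℰ.mul (ℰ.mul (ℰ.mul (k x) (k y)) (ℰ.inv (k (𝒢.mul x y))))
        (k (𝒢.mul x y)) = ℰ.mul (k x) (k y) :=
      cancel _ (𝒢.mul x y) (by rw [hsAB, 𝒢.s_mul x y hxy])
    have h1 : ℰ.s (ℰ.mul n (ℰ.mul (ℰ.mul (k x) m) (ℰ.inv (k x)))) =
        ℰ.r (ℰ.mul (ℰ.mul (k x) (k y)) (ℰ.inv (k (𝒢.mul x y)))) := by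
      rw [ℰ.s_mul _ _ hnL', hsL, hrσ]
    have key : ℰ.mul (ℰ.mul (ℰ.mul (k x) m) (ℰ.inv (k x))) (ℰ.mul (k x) (k y)) =
        ℰ.mul (k x) (ℰ.mul m (k y)) := by
      rw [← ℰ.assoc _ (k x) (k y) (by rw [hsL, hrk]) hAB,
        cancel (ℰ.mul (k x) m) x (by rw [hsAm, hxy]),
        ℰ.assoc (k x) m (k y) hAm (by rw [hsm, hrk])]
    rw [hL, hσ, ℰ.assoc _ _ _ h1 hsσ, cancelσ,
      ℰ.assoc n _ _ hnL' (by rw [hsL, ℰ.r_mul _ _ hAB, hrk]), key,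
      ← ℰ.assoc n (k x) _ (hsn.trans (hrk x).symm)
        (by rw [hsk, ℰ.r_mul _ _ (hsm.trans (hrk y).symm), hrm, hxy])]
  · exact hproj
  · rintro n hn
    rw [hk0, ℰ.mul_e]
end

section
/- Suppose (L,σ) satisfies the twisted action condition (F1). Then the map χ_{(L,σ)}: 𝒢⁽³⁾ → Z(𝒩) defined by χ_{(L,σ)}(x,y,z) = L_x(σ(y,z))σ(x,yz)σ(xy,z)⁻¹σ(x,y)⁻¹ is a 3-cocycle in Z³(𝒢, Z(𝒩))_L, i.e. for all composable quadruples (x,y,z,w): L_x(χ(y,z,w))·χ(xy,z,w)⁻¹·χ(x,yz,w)·χ(x,y,zw)⁻¹·χ(x,y,z) = 1. -/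
/-- `χ_{(L,σ)}(x,y,z) = L_x(σ(y,z)) σ(x,yz) σ(xy,z)⁻¹ σ(x,y)⁻¹`. -/
def chi {G U N : Type} (𝒢 : Gpd G U) (𝒩 : GrpBundle N U)
    (L : G → N → N) (σ : G → G → N) (x y z : G) : N :=
  𝒩.mul (𝒩.mul (𝒩.mul (L x (σ y z)) (σ x (𝒢.mul y z)))
    (𝒩.inv (σ (𝒢.mul x y) z))) (𝒩.inv (σ x y))


variable {G U N : Type}

instance inst_s12 (𝒩 : GrpBundle N U) (u : U) : Group (Fib 𝒩 u) where
  mul a b := ⟨𝒩.mul a.1 b.1, by rw [𝒩.p_mul a.1 b.1 (a.2.trans b.2.symm)]; exact a.2⟩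
  one := ⟨𝒩.one u, 𝒩.p_one u⟩
  inv a := ⟨𝒩.inv a.1, (𝒩.p_inv a.1).trans a.2⟩
  mul_assoc a b c := Subtype.ext (𝒩.assoc a.1 b.1 c.1 (a.2.trans b.2.symm) (b.2.trans c.2.symm))
  one_mul a := Subtype.ext (by have := 𝒩.one_mul a.1; rwa [a.2] at this)
  mul_one a := Subtype.ext (by have := 𝒩.mul_one a.1; rwa [a.2] at this)
  inv_mul_cancel a := Subtype.ext (by have := 𝒩.inv_mul a.1; rwa [a.2] at this)

section Lemmas

variable {𝒢 : Gpd G U} {𝒩 : GrpBundle N U} (P : PreFS 𝒢 𝒩)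

theorem PreFS.L_one (x : G) : P.L x (𝒩.one (𝒢.s x)) = 𝒩.one (𝒢.r x) := by
  have hp : 𝒩.p (𝒩.one (𝒢.s x)) = 𝒢.s x := 𝒩.p_one _
  have h : P.L x (𝒩.mul (𝒩.one (𝒢.s x)) (𝒩.one (𝒢.s x)))
      = 𝒩.mul (P.L x (𝒩.one (𝒢.s x))) (P.L x (𝒩.one (𝒢.s x))) := P.L_mul x _ _ hp hp
  have h2 : 𝒩.mul (𝒩.one (𝒢.s x)) (𝒩.one (𝒢.s x)) = 𝒩.one (𝒢.s x) := by
    have := 𝒩.one_mul (𝒩.one (𝒢.s x)); rwa [hp] at this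
  rw [h2] at h
  -- now in the fiber group over r x
  set a : Fib 𝒩 (𝒢.r x) := ⟨P.L x (𝒩.one (𝒢.s x)), P.L_fib x _ hp⟩ with ha
  have h3 : a = a * a := Subtype.ext h
  have h4 : a = 1 := left_eq_mul.mp h3
  exact congrArg Subtype.val h4

theorem PreFS.L_inv (x : G) (n : N) (hn : 𝒩.p n = 𝒢.s x) :
    P.L x (𝒩.inv n) = 𝒩.inv (P.L x n) := by
  have hpi : 𝒩.p (𝒩.inv n) = 𝒢.s x := (𝒩.p_inv n).trans hn
  have h : P.L x (𝒩.mul n (𝒩.inv n)) = 𝒩.mul (P.L x n) (P.L x (𝒩.inv n)) :=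
    P.L_mul x _ _ hn hpi
  have h2 : 𝒩.mul n (𝒩.inv n) = 𝒩.one (𝒢.s x) := by
    have := 𝒩.mul_inv n; rwa [hn] at this
  rw [h2, P.L_one x] at h
  set a : Fib 𝒩 (𝒢.r x) := ⟨P.L x n, P.L_fib x n hn⟩
  set b : Fib 𝒩 (𝒢.r x) := ⟨P.L x (𝒩.inv n), P.L_fib x _ hpi⟩
  have h3 : a * b = 1 := Subtype.ext h.symm
  have h4 : b = a⁻¹ := (inv_eq_of_mul_eq_one_right h3).symm
  exact congrArg Subtype.val h4

theorem chi_fib (x y z : G) (hxy : 𝒢.s x = 𝒢.r y) (hyz : 𝒢.s y = 𝒢.r z) :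
    𝒩.p (chi 𝒢 𝒩 P.L P.σ x y z) = 𝒢.r x := by
  have p1 : 𝒩.p (P.L x (P.σ y z)) = 𝒢.r x :=
    P.L_fib x _ ((P.σ_fib y z hyz).trans hxy.symm)
  have p2 : 𝒩.p (P.σ x (𝒢.mul y z)) = 𝒢.r x :=
    P.σ_fib _ _ (hxy.trans (𝒢.r_mul y z hyz).symm)
  have p3 : 𝒩.p (P.σ (𝒢.mul x y) z) = 𝒢.r x :=
    (P.σ_fib _ _ ((𝒢.s_mul x y hxy).trans hyz)).trans (𝒢.r_mul x y hxy)
  have q1 : 𝒩.p (𝒩.mul (P.L x (P.σ y z)) (P.σ x (𝒢.mul y z))) = 𝒢.r x :=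
    (𝒩.p_mul _ _ (p1.trans p2.symm)).trans p1
  have q2 : 𝒩.p (𝒩.mul (𝒩.mul (P.L x (P.σ y z)) (P.σ x (𝒢.mul y z)))
      (𝒩.inv (P.σ (𝒢.mul x y) z))) = 𝒢.r x :=
    (𝒩.p_mul _ _ (q1.trans ((𝒩.p_inv _).trans p3).symm)).trans q1
  exact (𝒩.p_mul _ _ (q2.trans ((𝒩.p_inv _).trans (P.σ_fib x y hxy)).symm)).trans q2

end Lemmas
/-- Pure group-theoretic pentagon computation. -/
theorem pentagon_aux {M : Type} [Group M]
    (C1 C2 C3 C4 C5 D E A B K S1 S2 S3 T1 T2 T3 : M)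
    (hC1 : C1 = ((D*E)*B⁻¹)*A⁻¹) (hC2 : C2 = ((K*T3)*S3⁻¹)*S2⁻¹)
    (hC3 : C3 = ((B*T2)*S3⁻¹)*T1⁻¹) (hC4 : C4 = ((E*T2)*T3⁻¹)*S1⁻¹)
    (hC5 : C5 = ((A*T1)*S2⁻¹)*S1⁻¹) (hD : D = (S1*K)*S1⁻¹)
    (z2 : ∀ m, Commute C2 m) (z3 : ∀ m, Commute C3 m) (z4 : ∀ m, Commute C4 m) :
    (((C1 * C2⁻¹) * C3) * C4⁻¹) * C5 = 1 := by
  have eE : E * T2 = C4 * (S1 * T3) := by rw [hC4]; group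
  have eB : B * T2 = C3 * (T1 * S3) := by rw [hC3]; group
  have eA : A * T1 = C5 * (S1 * S2) := by rw [hC5]; group
  have eDE : D * E = C1 * (A * B) := by rw [hC1]; group
  have l1 : C2 * (S1 * (S2 * S3)) = S1 * (K * T3) := by
    calc C2 * (S1 * (S2*S3)) = S1 * (C2 * (S2*S3)) := by
          rw [← mul_assoc, (z2 S1).eq, mul_assoc]
      _ = S1 * (K*T3) := by rw [hC2]; group
  have l2 : D * (E * T2) = C4 * (S1 * (K * T3)) := by
    calc D * (E*T2) = D * (C4 * (S1*T3)) := by rw [eE]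
      _ = C4 * (D * (S1*T3)) := by rw [← mul_assoc, ← (z4 D).eq, mul_assoc]
      _ = C4 * (S1 * (K*T3)) := by rw [hD]; group
  have l3 : D * (E * T2) = C1 * (C3 * (C5 * (S1 * (S2 * S3)))) := by
    calc D * (E*T2) = (D*E) * T2 := by rw [mul_assoc]
      _ = (C1*(A*B)) * T2 := by rw [eDE]
      _ = C1 * (A * (B * T2)) := by group
      _ = C1 * (A * (C3 * (T1*S3))) := by rw [eB]
      _ = C1 * (C3 * (A * (T1*S3))) := by rw [← mul_assoc A C3, ← (z3 A).eq, mul_assoc]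
      _ = C1 * (C3 * ((A*T1) * S3)) := by rw [mul_assoc]
      _ = C1 * (C3 * ((C5*(S1*S2)) * S3)) := by rw [eA]
      _ = C1 * (C3 * (C5 * (S1*(S2*S3)))) := by group
  have key : C4 * C2 = C1 * (C3 * C5) := by
    have h4 : C4 * (C2 * (S1*(S2*S3))) = (C1 * (C3 * C5)) * (S1*(S2*S3)) := by
      rw [l1, ← l2, l3]; group
    have h5 : (C4*C2) * (S1*(S2*S3)) = (C1*(C3*C5)) * (S1*(S2*S3)) := by
      rw [mul_assoc]; exact h4
    exact mul_right_cancel h5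
  have m2 : C2⁻¹ * C4⁻¹ = C4⁻¹ * C2⁻¹ := (((z2 C4).inv_left).inv_right).eq
  have m4 : C4⁻¹ * C5 = C5 * C4⁻¹ := ((z4 C5).inv_left).eq
  have m5 : C2⁻¹ * (C3 * (C5 * C4⁻¹)) = (C3 * (C5 * C4⁻¹)) * C2⁻¹ :=
    ((z2 (C3 * (C5 * C4⁻¹))).inv_left).eq
  calc (((C1 * C2⁻¹) * C3) * C4⁻¹) * C5
      = C1 * (C2⁻¹ * (C3 * (C4⁻¹ * C5))) := by simp only [mul_assoc]
    _ = C1 * (C2⁻¹ * (C3 * (C5 * C4⁻¹))) := by rw [m4]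
    _ = C1 * ((C3 * (C5 * C4⁻¹)) * C2⁻¹) := by rw [m5]
    _ = (C1 * (C3 * C5)) * (C4⁻¹ * C2⁻¹) := by simp only [mul_assoc]
    _ = (C4 * C2) * (C4⁻¹ * C2⁻¹) := by rw [key]
    _ = (C4 * C2) * (C2⁻¹ * C4⁻¹) := by rw [m2]
    _ = 1 := by group

/-- Pure group-theoretic conjugation computation. -/
theorem conj_comm_aux {M : Type} [Group M] (FA FB GA GB CC MM t : M)
    (ht : t = (GA*GB)⁻¹ * (MM * (GA*GB)))
    (hE : (FA * ((FB * t) * FB⁻¹)) * FA⁻¹ = (GA * ((GB * t) * GB⁻¹)) * GA⁻¹)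
    (hC : CC = ((FA*FB)*GB⁻¹)*GA⁻¹) : CC * MM = MM * CC := by
  subst ht hC
  have h1 : (FA*FB) * ((GA*GB)⁻¹ * (MM*(GA*GB))) * (FA*FB)⁻¹ = MM := by
    calc (FA*FB) * ((GA*GB)⁻¹ * (MM*(GA*GB))) * (FA*FB)⁻¹
        = (FA * ((FB * ((GA*GB)⁻¹ * (MM*(GA*GB)))) * FB⁻¹)) * FA⁻¹ := by group
      _ = (GA * ((GB * ((GA*GB)⁻¹ * (MM*(GA*GB)))) * GB⁻¹)) * GA⁻¹ := hE
      _ = MM := by group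
  conv_rhs => rw [← h1]
  group

section Central

variable {𝒢 : Gpd G U} {𝒩 : GrpBundle N U} (P : PreFS 𝒢 𝒩)

/-- `χ(x,y,z)` is central in the fiber over `r x`. -/
theorem chi_comm (x y z : G) (m : N) (hxy : 𝒢.s x = 𝒢.r y) (hyz : 𝒢.s y = 𝒢.r z)
    (hm : 𝒩.p m = 𝒢.r x) :
    𝒩.mul (chi 𝒢 𝒩 P.L P.σ x y z) m = 𝒩.mul m (chi 𝒢 𝒩 P.L P.σ x y z) := by
  -- groupoid bookkeeping
  have hrxy : 𝒢.r (𝒢.mul x y) = 𝒢.r x := 𝒢.r_mul x y hxy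
  have hsxy : 𝒢.s (𝒢.mul x y) = 𝒢.s y := 𝒢.s_mul x y hxy
  have hryz : 𝒢.r (𝒢.mul y z) = 𝒢.r y := 𝒢.r_mul y z hyz
  have hsyz : 𝒢.s (𝒢.mul y z) = 𝒢.s z := 𝒢.s_mul y z hyz
  have hsxy_rz : 𝒢.s (𝒢.mul x y) = 𝒢.r z := hsxy.trans hyz
  have hx_yz : 𝒢.s x = 𝒢.r (𝒢.mul y z) := hxy.trans hryz.symm
  have hrxyz : 𝒢.r (𝒢.mul (𝒢.mul x y) z) = 𝒢.r x :=
    (𝒢.r_mul _ z hsxy_rz).trans hrxy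
  have hsxyz : 𝒢.s (𝒢.mul (𝒢.mul x y) z) = 𝒢.s z := 𝒢.s_mul _ z hsxy_rz
  have hassoc : 𝒢.mul x (𝒢.mul y z) = 𝒢.mul (𝒢.mul x y) z :=
    (𝒢.assoc x y z hxy hyz).symm
  -- the fiber group elements
  set FA : Fib 𝒩 (𝒢.r x) := ⟨P.L x (P.σ y z), P.L_fib x _ ((P.σ_fib y z hyz).trans hxy.symm)⟩
    with hFA
  set FB : Fib 𝒩 (𝒢.r x) := ⟨P.σ x (𝒢.mul y z), P.σ_fib _ _ hx_yz⟩ with hFB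
  set GA : Fib 𝒩 (𝒢.r x) := ⟨P.σ x y, P.σ_fib x y hxy⟩ with hGA
  set GB : Fib 𝒩 (𝒢.r x) := ⟨P.σ (𝒢.mul x y) z, (P.σ_fib _ z hsxy_rz).trans hrxy⟩ with hGB
  set MM : Fib 𝒩 (𝒢.r x) := ⟨m, hm⟩ with hMM
  set tF : Fib 𝒩 (𝒢.r x) := (GA*GB)⁻¹ * (MM * (GA*GB)) with htF
  -- choose a preimage of tF under L (xy)z
  obtain ⟨n, hn, hLn⟩ := (P.L_bij (𝒢.mul (𝒢.mul x y) z)).surjOn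
    (show tF.1 ∈ {n | 𝒩.p n = 𝒢.r (𝒢.mul (𝒢.mul x y) z)} by
      show 𝒩.p tF.1 = _; rw [hrxyz]; exact tF.2)
  have hn' : 𝒩.p n = 𝒢.s (𝒢.mul (𝒢.mul x y) z) := hn
  have hpn : 𝒩.p n = 𝒢.s z := hn'.trans hsxyz
  have hpn_yz : 𝒩.p n = 𝒢.s (𝒢.mul y z) := hpn.trans hsyz.symm
  have hLn' : P.L (𝒢.mul (𝒢.mul x y) z) n = tF.1 := hLn
  -- raw equalities
  have e1 : P.L y (P.L z n)
      = 𝒩.mul (𝒩.mul (P.σ y z) (P.L (𝒢.mul y z) n)) (𝒩.inv (P.σ y z)) :=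
    P.F1 y z n hyz hpn
  have e2 : P.L x (P.L y (P.L z n))
      = 𝒩.mul (𝒩.mul (P.σ x y) (P.L (𝒢.mul x y) (P.L z n))) (𝒩.inv (P.σ x y)) :=
    P.F1 x y (P.L z n) hxy (by rw [P.L_fib z n hpn, ← hyz])
  have e3 : P.L (𝒢.mul x y) (P.L z n)
      = 𝒩.mul (𝒩.mul (P.σ (𝒢.mul x y) z) tF.1) (𝒩.inv (P.σ (𝒢.mul x y) z)) := by
    have := P.F1 (𝒢.mul x y) z n hsxy_rz hpn
    rwa [hLn'] at this
  have e4 : P.L x (P.L (𝒢.mul y z) n)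
      = 𝒩.mul (𝒩.mul (P.σ x (𝒢.mul y z)) tF.1) (𝒩.inv (P.σ x (𝒢.mul y z))) := by
    have := P.F1 x (𝒢.mul y z) n hx_yz hpn_yz
    rwa [hassoc, hLn'] at this
  -- fiber conditions for distributing L x
  have pσyz : 𝒩.p (P.σ y z) = 𝒢.s x := (P.σ_fib y z hyz).trans hxy.symm
  have pLyzn : 𝒩.p (P.L (𝒢.mul y z) n) = 𝒢.s x :=
    (P.L_fib _ n hpn_yz).trans (hryz.trans hxy.symm)
  have pmul1 : 𝒩.p (𝒩.mul (P.σ y z) (P.L (𝒢.mul y z) n)) = 𝒢.s x :=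
    (𝒩.p_mul _ _ (pσyz.trans pLyzn.symm)).trans pσyz
  have pinvσ : 𝒩.p (𝒩.inv (P.σ y z)) = 𝒢.s x := (𝒩.p_inv _).trans pσyz
  have left : P.L x (P.L y (P.L z n))
      = 𝒩.mul (𝒩.mul (P.L x (P.σ y z))
          (𝒩.mul (𝒩.mul (P.σ x (𝒢.mul y z)) tF.1) (𝒩.inv (P.σ x (𝒢.mul y z)))))
        (𝒩.inv (P.L x (P.σ y z))) := by
    rw [e1, P.L_mul x _ _ pmul1 pinvσ, P.L_mul x _ _ pσyz pLyzn,
      P.L_inv x _ pσyz, e4]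
  have right : P.L x (P.L y (P.L z n))
      = 𝒩.mul (𝒩.mul (P.σ x y)
          (𝒩.mul (𝒩.mul (P.σ (𝒢.mul x y) z) tF.1) (𝒩.inv (P.σ (𝒢.mul x y) z))))
        (𝒩.inv (P.σ x y)) := by
    rw [e2, e3]
  have EE : (FA * ((FB * tF) * FB⁻¹)) * FA⁻¹ = (GA * ((GB * tF) * GB⁻¹)) * GA⁻¹ :=
    Subtype.ext (left.symm.trans right)
  set CC : Fib 𝒩 (𝒢.r x) := ⟨chi 𝒢 𝒩 P.L P.σ x y z, chi_fib P x y z hxy hyz⟩ with hCC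
  have hCeq : CC = ((FA*FB)*GB⁻¹)*GA⁻¹ := Subtype.ext rfl
  have h : CC * MM = MM * CC := conj_comm_aux FA FB GA GB CC MM tF htF EE hCeq
  exact congrArg Subtype.val h

/-- `L x` of a central `χ(y,z,w)` is central in the fiber over `r x`. -/
theorem Lchi_comm (x y z w : G) (m : N) (hxy : 𝒢.s x = 𝒢.r y) (hyz : 𝒢.s y = 𝒢.r z)
    (hzw : 𝒢.s z = 𝒢.r w) (hm : 𝒩.p m = 𝒢.r x) :
    𝒩.mul (P.L x (chi 𝒢 𝒩 P.L P.σ y z w)) m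
      = 𝒩.mul m (P.L x (chi 𝒢 𝒩 P.L P.σ y z w)) := by
  obtain ⟨n, hn, hLn⟩ := (P.L_bij x).surjOn (show m ∈ {n | 𝒩.p n = 𝒢.r x} from hm)
  have hn' : 𝒩.p n = 𝒢.s x := hn
  have hLn' : P.L x n = m := hLn
  have hchi : 𝒩.p (chi 𝒢 𝒩 P.L P.σ y z w) = 𝒢.s x :=
    (chi_fib P y z w hyz hzw).trans hxy.symm
  have h1 : 𝒩.mul (chi 𝒢 𝒩 P.L P.σ y z w) n = 𝒩.mul n (chi 𝒢 𝒩 P.L P.σ y z w) :=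
    chi_comm P y z w n hyz hzw (hn'.trans hxy)
  calc 𝒩.mul (P.L x (chi 𝒢 𝒩 P.L P.σ y z w)) m
      = 𝒩.mul (P.L x (chi 𝒢 𝒩 P.L P.σ y z w)) (P.L x n) := by rw [hLn']
    _ = P.L x (𝒩.mul (chi 𝒢 𝒩 P.L P.σ y z w) n) := (P.L_mul x _ _ hchi hn').symm
    _ = P.L x (𝒩.mul n (chi 𝒢 𝒩 P.L P.σ y z w)) := by rw [h1]
    _ = 𝒩.mul (P.L x n) (P.L x (chi 𝒢 𝒩 P.L P.σ y z w)) := P.L_mul x _ _ hn' hchi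
    _ = 𝒩.mul m (P.L x (chi 𝒢 𝒩 P.L P.σ y z w)) := by rw [hLn']
  
end Central

/-- If `(L,σ)` satisfies the twisted action condition (F1), then
`χ_{(L,σ)}` is a 3-cocycle: for every composable quadruple `(x,y,z,w)`,
`L_x(χ(y,z,w)) · χ(xy,z,w)⁻¹ · χ(x,yz,w) · χ(x,y,zw)⁻¹ · χ(x,y,z) = 1`. -/
theorem stmt12 {G U N : Type} (𝒢 : Gpd G U) (𝒩 : GrpBundle N U) (P : PreFS 𝒢 𝒩) :
    ∀ x y z w, 𝒢.s x = 𝒢.r y → 𝒢.s y = 𝒢.r z → 𝒢.s z = 𝒢.r w →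
      𝒩.mul (𝒩.mul (𝒩.mul (𝒩.mul
        (P.L x (chi 𝒢 𝒩 P.L P.σ y z w))
        (𝒩.inv (chi 𝒢 𝒩 P.L P.σ (𝒢.mul x y) z w)))
        (chi 𝒢 𝒩 P.L P.σ x (𝒢.mul y z) w))
        (𝒩.inv (chi 𝒢 𝒩 P.L P.σ x y (𝒢.mul z w))))
        (chi 𝒢 𝒩 P.L P.σ x y z) = 𝒩.one (𝒢.r x) := by

  intro x y z w hxy hyz hzw
  -- groupoid bookkeeping
  have hrxy : 𝒢.r (𝒢.mul x y) = 𝒢.r x := 𝒢.r_mul x y hxy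
  have hsxy : 𝒢.s (𝒢.mul x y) = 𝒢.s y := 𝒢.s_mul x y hxy
  have hryz : 𝒢.r (𝒢.mul y z) = 𝒢.r y := 𝒢.r_mul y z hyz
  have hsyz : 𝒢.s (𝒢.mul y z) = 𝒢.s z := 𝒢.s_mul y z hyz
  have hrzw : 𝒢.r (𝒢.mul z w) = 𝒢.r z := 𝒢.r_mul z w hzw
  have hsxy_rz : 𝒢.s (𝒢.mul x y) = 𝒢.r z := hsxy.trans hyz
  have hsyz_rw : 𝒢.s (𝒢.mul y z) = 𝒢.r w := hsyz.trans hzw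
  have hx_yz : 𝒢.s x = 𝒢.r (𝒢.mul y z) := hxy.trans hryz.symm
  have hy_zw : 𝒢.s y = 𝒢.r (𝒢.mul z w) := hyz.trans hrzw.symm
  have hr_yzw : 𝒢.r (𝒢.mul y (𝒢.mul z w)) = 𝒢.r y := 𝒢.r_mul y _ hy_zw
  have hx_yzw : 𝒢.s x = 𝒢.r (𝒢.mul y (𝒢.mul z w)) := hxy.trans hr_yzw.symm
  have hrxyz : 𝒢.r (𝒢.mul (𝒢.mul x y) z) = 𝒢.r x := (𝒢.r_mul _ z hsxy_rz).trans hrxy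
  have hsxyz : 𝒢.s (𝒢.mul (𝒢.mul x y) z) = 𝒢.s z := 𝒢.s_mul _ z hsxy_rz
  have hsxyz_rw : 𝒢.s (𝒢.mul (𝒢.mul x y) z) = 𝒢.r w := hsxyz.trans hzw
  have hxy_zw : 𝒢.s (𝒢.mul x y) = 𝒢.r (𝒢.mul z w) := hsxy.trans hy_zw
  -- fiber membership facts
  have pσyz_sx : 𝒩.p (P.σ y z) = 𝒢.s x := (P.σ_fib y z hyz).trans hxy.symm
  have pσyzw_sx : 𝒩.p (P.σ (𝒢.mul y z) w) = 𝒢.s x :=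
    (P.σ_fib _ w hsyz_rw).trans (hryz.trans hxy.symm)
  have pσyzw2_sx : 𝒩.p (P.σ y (𝒢.mul z w)) = 𝒢.s x := (P.σ_fib y _ hy_zw).trans hxy.symm
  have pσzw_sy : 𝒩.p (P.σ z w) = 𝒢.s y := (P.σ_fib z w hzw).trans hyz.symm
  have pLyσzw_sx : 𝒩.p (P.L y (P.σ z w)) = 𝒢.s x := (P.L_fib y _ pσzw_sy).trans hxy.symm
  have pσzw_sxy : 𝒩.p (P.σ z w) = 𝒢.s (𝒢.mul x y) := pσzw_sy.trans hsxy.symm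
  -- the fiber group elements
  set S1 : Fib 𝒩 (𝒢.r x) := ⟨P.σ x y, P.σ_fib x y hxy⟩ with hS1
  set S2 : Fib 𝒩 (𝒢.r x) := ⟨P.σ (𝒢.mul x y) z, (P.σ_fib _ z hsxy_rz).trans hrxy⟩ with hS2
  set S3 : Fib 𝒩 (𝒢.r x) :=
    ⟨P.σ (𝒢.mul (𝒢.mul x y) z) w, (P.σ_fib _ w hsxyz_rw).trans hrxyz⟩ with hS3
  set T1 : Fib 𝒩 (𝒢.r x) := ⟨P.σ x (𝒢.mul y z), P.σ_fib x _ hx_yz⟩ with hT1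
  set T2 : Fib 𝒩 (𝒢.r x) := ⟨P.σ x (𝒢.mul y (𝒢.mul z w)), P.σ_fib x _ hx_yzw⟩ with hT2
  set T3 : Fib 𝒩 (𝒢.r x) :=
    ⟨P.σ (𝒢.mul x y) (𝒢.mul z w), (P.σ_fib _ _ hxy_zw).trans hrxy⟩ with hT3
  set A : Fib 𝒩 (𝒢.r x) := ⟨P.L x (P.σ y z), P.L_fib x _ pσyz_sx⟩ with hA
  set B : Fib 𝒩 (𝒢.r x) := ⟨P.L x (P.σ (𝒢.mul y z) w), P.L_fib x _ pσyzw_sx⟩ with hB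
  set E : Fib 𝒩 (𝒢.r x) := ⟨P.L x (P.σ y (𝒢.mul z w)), P.L_fib x _ pσyzw2_sx⟩ with hE
  set D : Fib 𝒩 (𝒢.r x) := ⟨P.L x (P.L y (P.σ z w)), P.L_fib x _ pLyσzw_sx⟩ with hDdef
  set K : Fib 𝒩 (𝒢.r x) :=
    ⟨P.L (𝒢.mul x y) (P.σ z w), (P.L_fib _ _ pσzw_sxy).trans hrxy⟩ with hK
  set C1 : Fib 𝒩 (𝒢.r x) :=
    ⟨P.L x (chi 𝒢 𝒩 P.L P.σ y z w),
      P.L_fib x _ ((chi_fib P y z w hyz hzw).trans hxy.symm)⟩ with hC1def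
  set C2 : Fib 𝒩 (𝒢.r x) :=
    ⟨chi 𝒢 𝒩 P.L P.σ (𝒢.mul x y) z w,
      (chi_fib P (𝒢.mul x y) z w hsxy_rz hzw).trans hrxy⟩ with hC2def
  set C3 : Fib 𝒩 (𝒢.r x) :=
    ⟨chi 𝒢 𝒩 P.L P.σ x (𝒢.mul y z) w, chi_fib P x (𝒢.mul y z) w hx_yz hsyz_rw⟩ with hC3def
  set C4 : Fib 𝒩 (𝒢.r x) :=
    ⟨chi 𝒢 𝒩 P.L P.σ x y (𝒢.mul z w), chi_fib P x y (𝒢.mul z w) hxy hy_zw⟩ with hC4def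
  set C5 : Fib 𝒩 (𝒢.r x) := ⟨chi 𝒢 𝒩 P.L P.σ x y z, chi_fib P x y z hxy hyz⟩ with hC5def
  -- expansions of the five cocycle values
  have hC2 : C2 = ((K*T3)*S3⁻¹)*S2⁻¹ := Subtype.ext rfl
  have hC4 : C4 = ((E*T2)*T3⁻¹)*S1⁻¹ := Subtype.ext rfl
  have hC5 : C5 = ((A*T1)*S2⁻¹)*S1⁻¹ := Subtype.ext rfl
  have hC3 : C3 = ((B*T2)*S3⁻¹)*T1⁻¹ := by
    apply Subtype.ext
    show chi 𝒢 𝒩 P.L P.σ x (𝒢.mul y z) w =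
      𝒩.mul (𝒩.mul (𝒩.mul (P.L x (P.σ (𝒢.mul y z) w))
          (P.σ x (𝒢.mul y (𝒢.mul z w))))
        (𝒩.inv (P.σ (𝒢.mul (𝒢.mul x y) z) w))) (𝒩.inv (P.σ x (𝒢.mul y z)))
    simp only [chi]
    rw [𝒢.assoc y z w hyz hzw, ← 𝒢.assoc x y z hxy hyz]
  have hC1 : C1 = ((D*E)*B⁻¹)*A⁻¹ := by
    apply Subtype.ext
    show P.L x (chi 𝒢 𝒩 P.L P.σ y z w) =
      𝒩.mul (𝒩.mul (𝒩.mul (P.L x (P.L y (P.σ z w))) (P.L x (P.σ y (𝒢.mul z w))))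
        (𝒩.inv (P.L x (P.σ (𝒢.mul y z) w)))) (𝒩.inv (P.L x (P.σ y z)))
    have pab : 𝒩.p (𝒩.mul (P.L y (P.σ z w)) (P.σ y (𝒢.mul z w))) = 𝒢.s x :=
      (𝒩.p_mul _ _ (pLyσzw_sx.trans pσyzw2_sx.symm)).trans pLyσzw_sx
    have pinvc : 𝒩.p (𝒩.inv (P.σ (𝒢.mul y z) w)) = 𝒢.s x := (𝒩.p_inv _).trans pσyzw_sx
    have pabc : 𝒩.p (𝒩.mul (𝒩.mul (P.L y (P.σ z w)) (P.σ y (𝒢.mul z w)))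
        (𝒩.inv (P.σ (𝒢.mul y z) w))) = 𝒢.s x :=
      (𝒩.p_mul _ _ (pab.trans pinvc.symm)).trans pab
    have pinvd : 𝒩.p (𝒩.inv (P.σ y z)) = 𝒢.s x := (𝒩.p_inv _).trans pσyz_sx
    simp only [chi]
    rw [P.L_mul x _ _ pabc pinvd, P.L_mul x _ _ pab pinvc,
      P.L_mul x _ _ pLyσzw_sx pσyzw2_sx, P.L_inv x _ pσyzw_sx, P.L_inv x _ pσyz_sx]
  have hD : D = (S1*K)*S1⁻¹ := Subtype.ext (P.F1 x y (P.σ z w) hxy pσzw_sy)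
  -- centrality
  have z2 : ∀ m : Fib 𝒩 (𝒢.r x), Commute C2 m := fun m =>
    Subtype.ext (chi_comm P (𝒢.mul x y) z w m.1 hsxy_rz hzw (m.2.trans hrxy.symm))
  have z3 : ∀ m : Fib 𝒩 (𝒢.r x), Commute C3 m := fun m =>
    Subtype.ext (chi_comm P x (𝒢.mul y z) w m.1 hx_yz hsyz_rw m.2)
  have z4 : ∀ m : Fib 𝒩 (𝒢.r x), Commute C4 m := fun m =>
    Subtype.ext (chi_comm P x y (𝒢.mul z w) m.1 hxy hy_zw m.2)
  exact congrArg Subtype.val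
    (pentagon_aux C1 C2 C3 C4 C5 D E A B K S1 S2 S3 T1 T2 T3
      hC1 hC2 hC3 hC4 hC5 hD z2 z3 z4)
end

section
/- Let 𝒢 be a groupoid, ℛ a unital ring bundle over 𝒢⁽⁰⁾, and (M,τ) a factor system for (𝒢,ℛ). Then for all x, y, z ∈ 𝒢 with xy = z the following identities hold: (1) τ(x,x⁻¹) = M_x(τ(x⁻¹,x)); (2) τ(z,y⁻¹) = τ(x,y)⁻¹M_x(τ(y,y⁻¹)); (3) τ(z,y⁻¹)τ(x,x⁻¹) = M_z(τ(y⁻¹,x⁻¹))τ(z,z⁻¹); (4) τ(z,y⁻¹)M_x(n) = M_z(M_{y⁻¹}(n))τ(z,y⁻¹) for all n ∈ R_{s(x)}. -/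
/-- Transport along an equality of base points of a bundle of types. -/
def tr {U : Type} (Rf : U → Type) {u v : U} (h : u = v) (a : Rf u) : Rf v := h ▸ a

/-- A factor system `(M,τ)` for `(𝒢,ℛ)`, where `ℛ` is the unital ring bundle with fibers
`Rf u`: `M_x : R_{s x} → R_{r x}` are ring isomorphisms which are trivial on units, and
`τ(x,y) ∈ R_{r x}ˣ` is normalized and satisfies the conditions (C1) and (C2). -/
structure RingFS {G U : Type} (𝒢 : Gpd G U) (Rf : U → Type) [∀ u, Ring (Rf u)] where
  M : (x : G) → Rf (𝒢.s x) → Rf (𝒢.r x)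
  τ : (x y : G) → Rf (𝒢.r x)
  τinv : (x y : G) → Rf (𝒢.r x)
  M_add : ∀ x a b, M x (a + b) = M x a + M x b
  M_mul : ∀ x a b, M x (a * b) = M x a * M x b
  M_one : ∀ x, M x 1 = 1
  M_bij : ∀ x, Function.Bijective (M x)
  M_e : ∀ u a, M (𝒢.e u) a = tr Rf ((𝒢.s_e u).trans (𝒢.r_e u).symm) a
  τ_mul_τinv : ∀ x y, 𝒢.s x = 𝒢.r y → τ x y * τinv x y = 1
  τinv_mul_τ : ∀ x y, 𝒢.s x = 𝒢.r y → τinv x y * τ x y = 1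
  τ_e_left : ∀ x, τ (𝒢.e (𝒢.r x)) x = 1
  τ_e_right : ∀ x, τ x (𝒢.e (𝒢.s x)) = 1
  C1 : ∀ x y (h : 𝒢.s x = 𝒢.r y) (n : Rf (𝒢.s y)),
    M x (tr Rf h.symm (M y n)) =
      τ x y * tr Rf (𝒢.r_mul x y h) (M (𝒢.mul x y) (tr Rf (𝒢.s_mul x y h).symm n)) * τinv x y
  C2 : ∀ x y z (hxy : 𝒢.s x = 𝒢.r y) (hyz : 𝒢.s y = 𝒢.r z),
    τ x y * tr Rf (𝒢.r_mul x y hxy) (τ (𝒢.mul x y) z) =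
      M x (tr Rf hxy.symm (τ y z)) * τ x (𝒢.mul y z)

section Aux

variable {G U : Type} (𝒢 : Gpd G U) (Rf : U → Type) [∀ u, Ring (Rf u)]

theorem tr_tr' {u v w : U} (h1 : u = v) (h2 : v = w) (a : Rf u) :
    tr Rf h2 (tr Rf h1 a) = tr Rf (h1.trans h2) a := by subst h1 h2; rfl

theorem tr_mul' {u v : U} (h : u = v) (a b : Rf u) :
    tr Rf h (a * b) = tr Rf h a * tr Rf h b := by subst h; rfl

theorem tr_one' {u v : U} (h : u = v) : tr Rf h (1 : Rf u) = 1 := by subst h; rfl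

theorem tr_heq' {u v : U} (h : u = v) (a : Rf u) : HEq (tr Rf h a) a := by subst h; rfl

variable (F : RingFS 𝒢 Rf)

/-- congruence for τ in its first argument, with transported fibers. -/
theorem tau_c {a b : G} (hab : a = b) (c : G) {u : U} (h1 : 𝒢.r a = u) (h2 : 𝒢.r b = u) :
    tr Rf h1 (F.τ a c) = tr Rf h2 (F.τ b c) := by subst hab; rfl

/-- congruence for M, with transported fibers and HEq arguments. -/
theorem M_c {a b : G} (hab : a = b) {u : U} (h1 : 𝒢.r a = u) (h2 : 𝒢.r b = u)
    {n : Rf (𝒢.s a)} {n' : Rf (𝒢.s b)} (hn : HEq n n') :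
    tr Rf h1 (F.M a n) = tr Rf h2 (F.M b n') := by subst hab; cases hn; rfl

theorem tau_left_cancel (x y : G) (h : 𝒢.s x = 𝒢.r y) {a b : Rf (𝒢.r x)}
    (hab : F.τ x y * a = F.τ x y * b) : a = b := by
  have h2 := congrArg (fun t => F.τinv x y * t) hab
  simpa only [← mul_assoc, F.τinv_mul_τ x y h, one_mul] using h2

theorem gpd_g1 (x y : G) (h : 𝒢.s x = 𝒢.r y) :
    𝒢.mul (𝒢.mul x y) (𝒢.inv y) = x := by
  rw [𝒢.assoc x y (𝒢.inv y) h (𝒢.r_inv y).symm, 𝒢.mul_inv y, ← h, 𝒢.mul_e]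

theorem gpd_inv_unique (a b : G) (h : 𝒢.s a = 𝒢.r b)
    (hab : 𝒢.mul a b = 𝒢.e (𝒢.r a)) : b = 𝒢.inv a := by
  calc b = 𝒢.mul (𝒢.e (𝒢.r b)) b := (𝒢.e_mul b).symm
    _ = 𝒢.mul (𝒢.mul (𝒢.inv a) a) b := by rw [← h, ← 𝒢.inv_mul a]
    _ = 𝒢.mul (𝒢.inv a) (𝒢.mul a b) := 𝒢.assoc _ _ _ (𝒢.s_inv a) h
    _ = 𝒢.mul (𝒢.inv a) (𝒢.e (𝒢.s (𝒢.inv a))) := by rw [hab, 𝒢.s_inv]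
    _ = 𝒢.inv a := 𝒢.mul_e _

theorem gpd_g2 (x y : G) (h : 𝒢.s x = 𝒢.r y) :
    𝒢.inv (𝒢.mul x y) = 𝒢.mul (𝒢.inv y) (𝒢.inv x) := by
  have h' : 𝒢.s (𝒢.inv y) = 𝒢.r (𝒢.inv x) :=
    (𝒢.s_inv y).trans (h.symm.trans (𝒢.r_inv x).symm)
  refine (gpd_inv_unique 𝒢 _ _ ?_ ?_).symm
  · rw [𝒢.s_mul x y h, 𝒢.r_mul _ _ h', 𝒢.r_inv]
  · calc 𝒢.mul (𝒢.mul x y) (𝒢.mul (𝒢.inv y) (𝒢.inv x))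
        = 𝒢.mul (𝒢.mul (𝒢.mul x y) (𝒢.inv y)) (𝒢.inv x) :=
          (𝒢.assoc _ _ _ ((𝒢.s_mul x y h).trans (𝒢.r_inv y).symm) h').symm
      _ = 𝒢.mul x (𝒢.inv x) := by rw [gpd_g1 𝒢 x y h]
      _ = 𝒢.e (𝒢.r x) := 𝒢.mul_inv x
      _ = 𝒢.e (𝒢.r (𝒢.mul x y)) := by rw [𝒢.r_mul x y h]

end Aux

/-- For a factor system `(M,τ)` for `(𝒢,ℛ)` and all `x, y, z ∈ 𝒢` with
`s x = r y` and `z = xy` one has: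
(1) `τ(x,x⁻¹) = M_x(τ(x⁻¹,x))`;
(2) `τ(z,y⁻¹) = τ(x,y)⁻¹ M_x(τ(y,y⁻¹))`;
(3) `τ(z,y⁻¹) τ(x,x⁻¹) = M_z(τ(y⁻¹,x⁻¹)) τ(z,z⁻¹)`;
(4) `τ(z,y⁻¹) M_x(n) = M_z(M_{y⁻¹}(n)) τ(z,y⁻¹)` for all `n ∈ R_{s x}`. -/
theorem stmt15 {G U : Type} (𝒢 : Gpd G U) (Rf : U → Type) [∀ u, Ring (Rf u)]
    (F : RingFS 𝒢 Rf) :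
    -- (1)
    (∀ x, F.τ x (𝒢.inv x) = F.M x (tr Rf (𝒢.r_inv x) (F.τ (𝒢.inv x) x))) ∧
    -- (2)
    (∀ x y (h : 𝒢.s x = 𝒢.r y),
      tr Rf (𝒢.r_mul x y h) (F.τ (𝒢.mul x y) (𝒢.inv y)) =
        F.τinv x y * F.M x (tr Rf h.symm (F.τ y (𝒢.inv y)))) ∧
    -- (3)
    (∀ x y (h : 𝒢.s x = 𝒢.r y),
      F.τ (𝒢.mul x y) (𝒢.inv y) *
          tr Rf (𝒢.r_mul x y h).symm (F.τ x (𝒢.inv x)) =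
        F.M (𝒢.mul x y)
            (tr Rf ((𝒢.r_inv y).trans (𝒢.s_mul x y h).symm)
              (F.τ (𝒢.inv y) (𝒢.inv x))) *
          F.τ (𝒢.mul x y) (𝒢.inv (𝒢.mul x y))) ∧
    -- (4)
    (∀ x y (h : 𝒢.s x = 𝒢.r y) (n : Rf (𝒢.s x)),
      F.τ (𝒢.mul x y) (𝒢.inv y) * tr Rf (𝒢.r_mul x y h).symm (F.M x n) =
        F.M (𝒢.mul x y)
            (tr Rf ((𝒢.r_inv y).trans (𝒢.s_mul x y h).symm)
              (F.M (𝒢.inv y) (tr Rf (h.trans (𝒢.s_inv y).symm) n))) *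
          F.τ (𝒢.mul x y) (𝒢.inv y)) := by
  refine ⟨?_, ?_, ?_, ?_⟩
  · -- (1)
    intro x
    have hxy : 𝒢.s x = 𝒢.r (𝒢.inv x) := (𝒢.r_inv x).symm
    have hyz : 𝒢.s (𝒢.inv x) = 𝒢.r x := 𝒢.s_inv x
    have hc2 := F.C2 x (𝒢.inv x) x hxy hyz
    have e1 : tr Rf (𝒢.r_mul x (𝒢.inv x) hxy) (F.τ (𝒢.mul x (𝒢.inv x)) x) = 1 := by
      rw [tau_c 𝒢 Rf F (𝒢.mul_inv x) x _ (𝒢.r_e (𝒢.r x)), F.τ_e_left x, tr_one']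
    have e2 : F.τ x (𝒢.mul (𝒢.inv x) x) = 1 := by
      rw [𝒢.inv_mul x]; exact F.τ_e_right x
    rw [e1, e2, mul_one, mul_one] at hc2
    exact hc2
  · -- (2)
    intro x y h
    have hyz : 𝒢.s y = 𝒢.r (𝒢.inv y) := (𝒢.r_inv y).symm
    have hc2 := F.C2 x y (𝒢.inv y) h hyz
    have e2 : F.τ x (𝒢.mul y (𝒢.inv y)) = 1 := by
      rw [𝒢.mul_inv y, ← h]; exact F.τ_e_right x
    rw [e2, mul_one] at hc2
    calc tr Rf (𝒢.r_mul x y h) (F.τ (𝒢.mul x y) (𝒢.inv y))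
        = F.τinv x y * (F.τ x y * tr Rf (𝒢.r_mul x y h) (F.τ (𝒢.mul x y) (𝒢.inv y))) := by
          rw [← mul_assoc, F.τinv_mul_τ x y h, one_mul]
      _ = F.τinv x y * F.M x (tr Rf h.symm (F.τ y (𝒢.inv y))) := by rw [hc2]
  · -- (3)
    intro x y h
    have hxy' : 𝒢.s (𝒢.mul x y) = 𝒢.r (𝒢.inv y) := (𝒢.s_mul x y h).trans (𝒢.r_inv y).symm
    have hyz' : 𝒢.s (𝒢.inv y) = 𝒢.r (𝒢.inv x) :=
      (𝒢.s_inv y).trans (h.symm.trans (𝒢.r_inv x).symm)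
    have hc2 := F.C2 (𝒢.mul x y) (𝒢.inv y) (𝒢.inv x) hxy' hyz'
    have e1 : tr Rf (𝒢.r_mul (𝒢.mul x y) (𝒢.inv y) hxy')
        (F.τ (𝒢.mul (𝒢.mul x y) (𝒢.inv y)) (𝒢.inv x)) =
        tr Rf (𝒢.r_mul x y h).symm (F.τ x (𝒢.inv x)) :=
      tau_c 𝒢 Rf F (gpd_g1 𝒢 x y h) (𝒢.inv x) _ _
    have e2 : F.τ (𝒢.mul x y) (𝒢.mul (𝒢.inv y) (𝒢.inv x)) =
        F.τ (𝒢.mul x y) (𝒢.inv (𝒢.mul x y)) := by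
      rw [← gpd_g2 𝒢 x y h]
    rw [e1, e2] at hc2
    exact hc2
  · -- (4)
    intro x y h n
    have hxy' : 𝒢.s (𝒢.mul x y) = 𝒢.r (𝒢.inv y) := (𝒢.s_mul x y h).trans (𝒢.r_inv y).symm
    have hc1 := F.C1 (𝒢.mul x y) (𝒢.inv y) hxy' (tr Rf (h.trans (𝒢.s_inv y).symm) n)
    have e1 : tr Rf (𝒢.r_mul (𝒢.mul x y) (𝒢.inv y) hxy')
        (F.M (𝒢.mul (𝒢.mul x y) (𝒢.inv y)) (tr Rf (𝒢.s_mul (𝒢.mul x y) (𝒢.inv y) hxy').symm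
          (tr Rf (h.trans (𝒢.s_inv y).symm) n))) =
        tr Rf (𝒢.r_mul x y h).symm (F.M x n) := by
      refine M_c 𝒢 Rf F (gpd_g1 𝒢 x y h) _ _ ?_
      rw [tr_tr']
      exact tr_heq' Rf _ n
    rw [e1] at hc1
    calc F.τ (𝒢.mul x y) (𝒢.inv y) * tr Rf (𝒢.r_mul x y h).symm (F.M x n)
        = F.τ (𝒢.mul x y) (𝒢.inv y) * tr Rf (𝒢.r_mul x y h).symm (F.M x n) *
            (F.τinv (𝒢.mul x y) (𝒢.inv y) * F.τ (𝒢.mul x y) (𝒢.inv y)) := by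
          rw [F.τinv_mul_τ (𝒢.mul x y) (𝒢.inv y) hxy', mul_one]
      _ = (F.τ (𝒢.mul x y) (𝒢.inv y) * tr Rf (𝒢.r_mul x y h).symm (F.M x n) *
            F.τinv (𝒢.mul x y) (𝒢.inv y)) * F.τ (𝒢.mul x y) (𝒢.inv y) := by
          rw [← mul_assoc]
      _ = F.M (𝒢.mul x y)
            (tr Rf ((𝒢.r_inv y).trans (𝒢.s_mul x y h).symm)
              (F.M (𝒢.inv y) (tr Rf (h.trans (𝒢.s_inv y).symm) n))) *
          F.τ (𝒢.mul x y) (𝒢.inv y) := by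
          rw [← hc1]
end
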